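/- arXiv:2202.10296 — 6 statements merged into one kernel-verified Lean document; each statement's English description precedes it below -/
import Mathlib

section
/- Let Y have density y^{-2}·1_{[1,∞)}(y) and let N(Y) be mixed Poisson with mixing variable Y. Then for n ≥ 2, n(n−1)·P(N(Y)=n) = P(S_{n-1} > 1) where S_{n-1} ∼ Gamma(n−1, 1); consequently for any r > 1, r^n·P(N(Y)=n) → ∞ as n → ∞, so Σ_i (1−s)^i P(N(Y)=i) fails to converge absolutely for s ∉ [0,2]. -/
open scoped BigOperators

/-- `IsPMF p` : `p` is a probability mass function on `ℕ`. -/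
def IsPMF (p : ℕ → ℝ) : Prop :=
  (∀ n, 0 ≤ p n) ∧ HasSum p 1

/-- Binomial `α`-thinning at the level of distributions:
`thin α p k = P(α ∘ X = k)` when `X` has pmf `p`. -/
noncomputable def thin (α : ℝ) (p : ℕ → ℝ) (k : ℕ) : ℝ :=
  ∑' n : ℕ, (n.choose k : ℝ) * α ^ k * (1 - α) ^ (n - k) * p n

/-- Convolution of two pmfs on `ℕ` (law of the sum of independent variables). -/
noncomputable def conv (p q : ℕ → ℝ) (n : ℕ) : ℝ :=
  ∑ k ∈ Finset.range (n + 1), p k * q (n - k)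

/-- `MemM α p` : the distribution `p` is an `α`-thinned distribution, i.e. `p ∈ M_α`. -/
def MemM (α : ℝ) (p : ℕ → ℝ) : Prop :=
  ∃ q : ℕ → ℝ, IsPMF q ∧ ∀ k, p k = thin α q k

/-- `rho p` : the minimal thinning parameter `ρ(X)`. -/
noncomputable def rho (p : ℕ → ℝ) : ℝ :=
  sInf {α : ℝ | α ∈ Set.Icc (0:ℝ) 1 ∧ MemM α p}

open MeasureTheory Set Filter Topology

lemma intOn (m : ℕ) : IntegrableOn (fun y : ℝ => Real.exp (-y) * y ^ m) (Ioi 0) := by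
  have h := Real.GammaIntegral_convergent (s := (m + 1 : ℝ)) (by positivity)
  simp only [add_sub_cancel_right] at h
  apply h.congr_fun ?_ measurableSet_Ioi
  intro x hx
  simp [Real.rpow_natCast]

lemma intIoi0 (m : ℕ) : ∫ y in Ioi (0:ℝ), Real.exp (-y) * y ^ m = m.factorial := by
  have h := Real.Gamma_eq_integral (s := (m + 1 : ℝ)) (by positivity)
  simp only [add_sub_cancel_right] at h
  rw [show ((m:ℝ)+1) = ((m:ℕ):ℝ)+1 by norm_num, Real.Gamma_nat_eq_factorial] at h
  rw [h]
  apply setIntegral_congr_fun measurableSet_Ioi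
  intro x hx
  simp [Real.rpow_natCast]

lemma intOn1 (m : ℕ) : IntegrableOn (fun y : ℝ => Real.exp (-y) * y ^ m) (Ioi 1) :=
  (intOn m).mono_set (Ioi_subset_Ioi zero_le_one)

lemma Jlb (m : ℕ) : (m.factorial : ℝ) - 1 ≤ ∫ y in Ioi (1:ℝ), Real.exp (-y) * y ^ m := by
  have hsplit : (Ioc (0:ℝ) 1) ∪ Ioi (1:ℝ) = Ioi 0 := Ioc_union_Ioi_eq_Ioi zero_le_one
  have h1 : IntegrableOn (fun y : ℝ => Real.exp (-y) * y ^ m) (Ioc 0 1) :=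
    (intOn m).mono_set Ioc_subset_Ioi_self
  have hadd : (∫ y in Ioc (0:ℝ) 1, Real.exp (-y) * y ^ m)
      + ∫ y in Ioi (1:ℝ), Real.exp (-y) * y ^ m = m.factorial := by
    rw [← intIoi0 m, ← hsplit,
      setIntegral_union (by simp [disjoint_left]) measurableSet_Ioi h1 (intOn1 m)]
  have hle : (∫ y in Ioc (0:ℝ) 1, Real.exp (-y) * y ^ m) ≤ 1 := by
    have : (∫ y in Ioc (0:ℝ) 1, Real.exp (-y) * y ^ m) ≤ ∫ _ in Ioc (0:ℝ) 1, (1:ℝ) := by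
      apply setIntegral_mono_on h1 (integrableOn_const (by simp))
        measurableSet_Ioc
      intro x hx
      have h2 : Real.exp (-x) ≤ 1 := by
        rw [Real.exp_le_one_iff]; linarith [hx.1]
      have h3 : x ^ m ≤ 1 := pow_le_one₀ hx.1.le hx.2
      calc Real.exp (-x) * x ^ m ≤ 1 * 1 := by
            apply mul_le_mul h2 h3 (pow_nonneg hx.1.le m) zero_le_one
        _ = 1 := by ring
    simpa using this
  linarith

lemma keyeq (n : ℕ) (hn : 2 ≤ n) :
    (∫ y in Ioi (1:ℝ), Real.exp (-y) * y ^ n / (n.factorial : ℝ) / y ^ 2)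
      = (n.factorial : ℝ)⁻¹ * ∫ y in Ioi (1:ℝ), Real.exp (-y) * y ^ (n - 2) := by
  rw [← integral_const_mul]
  apply setIntegral_congr_fun measurableSet_Ioi
  intro y hy
  have hy0 : (0:ℝ) < y := lt_trans one_pos hy
  have hpow : y ^ n = y ^ (n - 2) * y ^ 2 := by
    rw [← pow_add]; congr 1; omega
  field_simp [hpow]
  rw [hpow]; ring

lemma facsplit (n : ℕ) (hn : 2 ≤ n) :
    (n.factorial : ℝ) = (n:ℝ) * ((n:ℝ) - 1) * ((n-2).factorial : ℝ) := by
  obtain ⟨m, rfl⟩ : ∃ m, n = m + 2 := ⟨n - 2, by omega⟩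
  simp [Nat.factorial_succ]
  push_cast
  ring

lemma part1 (n : ℕ) (hn : 2 ≤ n) :
    (n : ℝ) * ((n : ℝ) - 1) *
        (∫ y in Set.Ioi (1:ℝ), Real.exp (-y) * y ^ n / (n.factorial : ℝ) / y ^ 2) =
      ∫ y in Set.Ioi (1:ℝ), Real.exp (-y) * y ^ (n - 2) / ((n - 2).factorial : ℝ) := by
  rw [keyeq n hn, integral_div, facsplit n hn]
  have h1 : (0:ℝ) < (n:ℝ) := by exact_mod_cast lt_of_lt_of_le two_pos hn
  have h2 : (0:ℝ) < (n:ℝ) - 1 := by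
    have : (2:ℝ) ≤ (n:ℝ) := by exact_mod_cast hn
    linarith
  have h3 : (0:ℝ) < ((n-2).factorial : ℝ) := by
    exact_mod_cast Nat.factorial_pos _
  field_simp

lemma part2 (r : ℝ) (hr : 1 < r) :
    Filter.Tendsto
      (fun n : ℕ =>
        r ^ n * ∫ y in Set.Ioi (1:ℝ), Real.exp (-y) * y ^ n / (n.factorial : ℝ) / y ^ 2)
      Filter.atTop Filter.atTop := by
  have hr0 : (0:ℝ) < r := lt_trans one_pos hr
  have hinv : ‖r⁻¹‖ < 1 := by
    rw [Real.norm_eq_abs, abs_of_pos (by positivity)]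
    exact inv_lt_one_of_one_lt₀ hr
  have h0 : Tendsto (fun n : ℕ => (n:ℝ) ^ 2 * r⁻¹ ^ n) atTop (𝓝 0) :=
    (summable_pow_mul_geometric_of_norm_lt_one 2 hinv).tendsto_atTop_zero
  have htend : Tendsto (fun n : ℕ => (2 * ((n:ℝ) ^ 2 * r⁻¹ ^ n))⁻¹) atTop atTop := by
    apply tendsto_inv_nhdsGT_zero.comp
    rw [tendsto_nhdsWithin_iff]
    constructor
    · simpa using h0.const_mul 2
    · filter_upwards [eventually_ge_atTop 1] with n hn
      have hn0 : (0:ℝ) < (n:ℝ) := by exact_mod_cast hn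
      have : (0:ℝ) < r⁻¹ ^ n := by positivity
      exact mem_Ioi.2 (by positivity)
  apply tendsto_atTop_mono' atTop ?_ htend
  filter_upwards [eventually_ge_atTop 4] with n hn4
  have hn2 : (2:ℕ) ≤ n := by omega
  have hn0 : (0:ℝ) < (n:ℝ) := by exact_mod_cast (by omega : 0 < n)
  have hn1 : (0:ℝ) < (n:ℝ) - 1 := by
    have : (2:ℝ) ≤ (n:ℝ) := by exact_mod_cast hn2
    linarith
  have hF : (0:ℝ) < ((n-2).factorial : ℝ) := by exact_mod_cast Nat.factorial_pos _
  have h2F : (2:ℝ) ≤ ((n-2).factorial : ℝ) := by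
    exact_mod_cast le_trans (by omega : 2 ≤ n - 2) (Nat.self_le_factorial _)
  have hJ : ((n-2).factorial : ℝ) - 1 ≤ ∫ y in Ioi (1:ℝ), Real.exp (-y) * y ^ (n-2) := Jlb _
  set J := ∫ y in Ioi (1:ℝ), Real.exp (-y) * y ^ (n-2) with hJdef
  have hJ2 : ((n-2).factorial : ℝ) / 2 ≤ J := by linarith
  rw [keyeq n hn2, facsplit n hn2]
  set F := ((n-2).factorial : ℝ)
  have step1 : ((n:ℝ) ^ 2 * 2)⁻¹ ≤ ((n:ℝ) * ((n:ℝ) - 1) * F)⁻¹ * J := by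
    have e : ((n:ℝ) * ((n:ℝ) - 1) * F)⁻¹ * (F / 2) = ((n:ℝ) * ((n:ℝ) - 1) * 2)⁻¹ := by
      field_simp
    have h5 : ((n:ℝ) ^ 2 * 2)⁻¹ ≤ ((n:ℝ) * ((n:ℝ) - 1) * 2)⁻¹ := by
      apply inv_anti₀ (by positivity)
      nlinarith
    calc ((n:ℝ) ^ 2 * 2)⁻¹ ≤ ((n:ℝ) * ((n:ℝ) - 1) * F)⁻¹ * (F / 2) := by rw [e]; exact h5
      _ ≤ ((n:ℝ) * ((n:ℝ) - 1) * F)⁻¹ * J :=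
          mul_le_mul_of_nonneg_left hJ2 (by positivity)
  calc (2 * ((n:ℝ) ^ 2 * r⁻¹ ^ n))⁻¹ = r ^ n * ((n:ℝ) ^ 2 * 2)⁻¹ := by
        rw [inv_pow]
        field_simp
    _ ≤ r ^ n * (((n:ℝ) * ((n:ℝ) - 1) * F)⁻¹ * J) :=
        mul_le_mul_of_nonneg_left step1 (by positivity)

lemma part3 (s : ℝ) (hs : s ∉ Set.Icc (0:ℝ) 2) :
    ¬ Summable fun i : ℕ =>
        |1 - s| ^ i *
          ∫ y in Set.Ioi (1:ℝ), Real.exp (-y) * y ^ i / (i.factorial : ℝ) / y ^ 2 := by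
  intro hsum
  have hr : 1 < |1 - s| := by
    simp only [Set.mem_Icc, not_and_or, not_le] at hs
    rcases hs with h | h
    · rw [abs_of_pos (by linarith)]; linarith
    · rw [abs_of_neg (by linarith)]; linarith
  have h1 := (part2 _ hr).eventually_gt_atTop 1
  have h2 : ∀ᶠ n : ℕ in atTop,
      |1 - s| ^ n * (∫ y in Set.Ioi (1:ℝ),
        Real.exp (-y) * y ^ n / (n.factorial : ℝ) / y ^ 2) < 1 :=
    hsum.tendsto_atTop_zero.eventually_lt_const one_pos
  obtain ⟨n, hn1, hn2⟩ := (h1.and h2).exists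
  linarith

/-- for `Y` with density `y⁻² 1_{[1,∞)}(y)` and `N(Y)` mixed Poisson,
`n(n−1) P(N(Y)=n) = P(S_{n−1} > 1)` (a Gamma(n−1,1) tail) for `n ≥ 2`, hence
`r^n P(N(Y)=n) → ∞` for every `r > 1`, and `Σ_i (1−s)^i P(N(Y)=i)` does not
converge absolutely for `s ∉ [0,2]`. -/
theorem stmt_4 :
    (∀ n : ℕ, 2 ≤ n →
        (n : ℝ) * ((n : ℝ) - 1) *
            (∫ y in Set.Ioi (1:ℝ), Real.exp (-y) * y ^ n / (n.factorial : ℝ) / y ^ 2) =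
          ∫ y in Set.Ioi (1:ℝ), Real.exp (-y) * y ^ (n - 2) / ((n - 2).factorial : ℝ)) ∧
    (∀ r : ℝ, 1 < r →
        Filter.Tendsto
          (fun n : ℕ =>
            r ^ n * ∫ y in Set.Ioi (1:ℝ), Real.exp (-y) * y ^ n / (n.factorial : ℝ) / y ^ 2)
          Filter.atTop Filter.atTop) ∧
    (∀ s : ℝ, s ∉ Set.Icc (0:ℝ) 2 →
        ¬ Summable fun i : ℕ =>
            |1 - s| ^ i *
              ∫ y in Set.Ioi (1:ℝ), Real.exp (-y) * y ^ i / (i.factorial : ℝ) / y ^ 2) :=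
  ⟨part1, part2, part3⟩
end

section
/- For every α ∈ (0,1], M_{α+} = M_α; that is, if a nonnegative integer-valued X satisfies X ∈ M_γ for every γ ∈ (α,1], then X ∈ M_α. Moreover, M_α ⊂ M_β for 0 < α < β ≤ 1. -/
open scoped BigOperators

section Stmt6Aux

open Filter Finset Topology

/-- The binomial weight. -/
noncomputable def wgt (γ : ℝ) (n k : ℕ) : ℝ :=
  (n.choose k : ℝ) * γ ^ k * (1 - γ) ^ (n - k)

lemma thin_eq_tsum (γ : ℝ) (p : ℕ → ℝ) (k : ℕ) :
    thin γ p k = ∑' n, wgt γ n k * p n := rfl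

lemma wgt_nonneg {γ : ℝ} (h0 : 0 ≤ γ) (h1 : γ ≤ 1) (n k : ℕ) : 0 ≤ wgt γ n k :=
  mul_nonneg (mul_nonneg (by positivity) (pow_nonneg h0 _)) (pow_nonneg (by linarith) _)

lemma wgt_zero_of_lt {γ : ℝ} {n k : ℕ} (h : n < k) : wgt γ n k = 0 := by
  simp [wgt, Nat.choose_eq_zero_of_lt h]

lemma sum_wgt (γ : ℝ) (n : ℕ) : ∑ k ∈ range (n + 1), wgt γ n k = 1 := by
  have h := add_pow γ (1 - γ) n
  have h2 : γ + (1 - γ) = 1 := by ring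
  rw [h2, one_pow] at h
  have h3 : ∑ k ∈ range (n + 1), wgt γ n k
      = ∑ k ∈ range (n + 1), γ ^ k * (1 - γ) ^ (n - k) * (n.choose k : ℝ) :=
    Finset.sum_congr rfl fun k _ => by simp only [wgt]; ring
  rw [h3, ← h]

lemma wgt_le_one {γ : ℝ} (h0 : 0 ≤ γ) (h1 : γ ≤ 1) (n k : ℕ) : wgt γ n k ≤ 1 := by
  rcases lt_or_ge n k with h | h
  · rw [wgt_zero_of_lt h]; norm_num
  · calc wgt γ n k ≤ ∑ j ∈ range (n + 1), wgt γ n j :=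
        Finset.single_le_sum (fun j _ => wgt_nonneg h0 h1 n j)
          (Finset.mem_range.mpr (Nat.lt_succ_of_le h))
    _ = 1 := sum_wgt γ n

lemma sum_wgt_mul_wgt (β δ : ℝ) (n k : ℕ) :
    ∑ m ∈ range (n + 1), wgt β m k * wgt δ n m = wgt (β * δ) n k := by
  rcases lt_or_ge n k with hnk | hkn
  · rw [wgt_zero_of_lt hnk]
    refine Finset.sum_eq_zero fun m hm => ?_
    have : m < k := lt_of_lt_of_le (Finset.mem_range.mp hm) (by omega)
    rw [wgt_zero_of_lt this, zero_mul]
  · have step1 : ∑ m ∈ range (n + 1), wgt β m k * wgt δ n m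
        = ∑ m ∈ Finset.Ico k (n + 1), wgt β m k * wgt δ n m := by
      symm
      apply Finset.sum_subset
      · intro x hx
        simp only [Finset.mem_Ico] at hx
        exact Finset.mem_range.mpr hx.2
      · intro x hx hx2
        simp only [Finset.mem_range] at hx
        simp only [Finset.mem_Ico, not_and, not_le] at hx2
        have : x < k := by omega
        rw [wgt_zero_of_lt this, zero_mul]
    rw [step1, Finset.sum_Ico_eq_sum_range]
    have hnk1 : n + 1 - k = (n - k) + 1 := by omega
    rw [hnk1]
    have step2 : ∀ j ∈ range ((n - k) + 1),
        wgt β (k + j) k * wgt δ n (k + j)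
          = ((n.choose k : ℝ) * (β * δ) ^ k) *
            (((1 - β) * δ) ^ j * (1 - δ) ^ (n - k - j) * (((n - k).choose j : ℝ))) := by
      intro j hj
      have hj' : j ≤ n - k := Nat.lt_succ_iff.mp (Finset.mem_range.mp hj)
      have hc : (n.choose (k + j) : ℝ) * (((k + j).choose k : ℝ))
          = (n.choose k : ℝ) * (((n - k).choose j : ℝ)) := by
        have h := Nat.choose_mul (n := n) (Nat.le_add_right k j)
        have h2 : k + j - k = j := by omega
        rw [h2] at h
        exact_mod_cast congrArg (fun x : ℕ => (x : ℝ)) h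
      simp only [wgt]
      have e1 : k + j - k = j := by omega
      have e2 : n - (k + j) = n - k - j := by omega
      rw [e1, e2, mul_pow β δ k, mul_pow (1 - β) δ j]
      linear_combination (β ^ k * δ ^ k * (1 - β) ^ j * δ ^ j * (1 - δ) ^ (n - k - j)) * hc
    rw [Finset.sum_congr rfl step2, ← Finset.mul_sum]
    have hpow := add_pow ((1 - β) * δ) (1 - δ) (n - k)
    rw [← hpow]
    have hbase : (1 - β) * δ + (1 - δ) = 1 - β * δ := by ring
    rw [hbase]
    simp only [wgt]

lemma summable_wgt_mul {γ : ℝ} (h0 : 0 ≤ γ) (h1 : γ ≤ 1) {q : ℕ → ℝ}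
    (hq0 : ∀ n, 0 ≤ q n) (hq : Summable q) (k : ℕ) :
    Summable fun n => wgt γ n k * q n :=
  Summable.of_nonneg_of_le (fun n => mul_nonneg (wgt_nonneg h0 h1 n k) (hq0 n))
    (fun n => mul_le_of_le_one_left (hq0 n) (wgt_le_one h0 h1 n k)) hq

lemma thin_nonneg {γ : ℝ} (h0 : 0 ≤ γ) (h1 : γ ≤ 1) {q : ℕ → ℝ}
    (hq0 : ∀ n, 0 ≤ q n) (k : ℕ) : 0 ≤ thin γ q k := by
  rw [thin_eq_tsum]
  exact tsum_nonneg fun n => mul_nonneg (wgt_nonneg h0 h1 n k) (hq0 n)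

lemma hasSum_thin {γ : ℝ} (h0 : 0 ≤ γ) (h1 : γ ≤ 1) {q : ℕ → ℝ}
    (hq : IsPMF q) : HasSum (thin γ q) 1 := by
  obtain ⟨hq0, hq1⟩ := hq
  have hF0 : ∀ x : ℕ × ℕ, 0 ≤ wgt γ x.1 x.2 * q x.1 :=
    fun x => mul_nonneg (wgt_nonneg h0 h1 _ _) (hq0 _)
  have hzero : ∀ n : ℕ, ∀ k ∉ range (n + 1), wgt γ n k * q n = 0 := by
    intro n k hk
    rw [wgt_zero_of_lt (show n < k by simp only [Finset.mem_range] at hk; omega), zero_mul]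
  have hrow : ∀ n : ℕ, (∑' k, wgt γ n k * q n) = q n := by
    intro n
    rw [tsum_eq_sum (hzero n), ← Finset.sum_mul, sum_wgt, one_mul]
  have hrowS : ∀ n : ℕ, Summable fun k => wgt γ n k * q n := fun n =>
    summable_of_ne_finset_zero (hzero n)
  have hsumF : Summable (fun x : ℕ × ℕ => wgt γ x.1 x.2 * q x.1) := by
    rw [summable_prod_of_nonneg hF0]
    exact ⟨hrowS, by simpa only [hrow] using hq1.summable⟩
  have hcol : Summable fun k => ∑' n, wgt γ n k * q n := by
    have h := hsumF.prod_symm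
    have := (summable_prod_of_nonneg (f := fun x : ℕ × ℕ => wgt γ x.2 x.1 * q x.2)
      (fun x => hF0 x.swap)).mp h
    exact this.2
  have hthin : thin γ q = fun k => ∑' n, wgt γ n k * q n :=
    funext fun k => thin_eq_tsum γ q k
  rw [hthin]
  refine hcol.hasSum_iff.mpr ?_
  calc ∑' k, ∑' n, wgt γ n k * q n = ∑' n, ∑' k, wgt γ n k * q n :=
        Summable.tsum_comm (f := fun n k => wgt γ n k * q n) hsumF
    _ = ∑' n, q n := tsum_congr hrow
    _ = 1 := hq1.tsum_eq

lemma isPMF_thin {γ : ℝ} (h0 : 0 ≤ γ) (h1 : γ ≤ 1) {q : ℕ → ℝ}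
    (hq : IsPMF q) : IsPMF (thin γ q) :=
  ⟨fun k => thin_nonneg h0 h1 hq.1 k, hasSum_thin h0 h1 hq⟩

lemma thin_one_eq (q : ℕ → ℝ) (k : ℕ) : thin 1 q k = q k := by
  rw [thin_eq_tsum, tsum_eq_single k]
  · simp [wgt]
  · intro n hn
    rcases lt_or_gt_of_ne hn with h | h
    · rw [wgt_zero_of_lt h, zero_mul]
    · have h2 : n - k ≠ 0 := by omega
      simp [wgt, zero_pow h2]

lemma thin_comp {β δ : ℝ} (hβ0 : 0 ≤ β) (hβ1 : β ≤ 1) (hδ0 : 0 ≤ δ) (hδ1 : δ ≤ 1)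
    {q : ℕ → ℝ} (hq0 : ∀ n, 0 ≤ q n) (hq : Summable q) (k : ℕ) :
    thin β (thin δ q) k = thin (β * δ) q k := by
  have hrow0 : ∀ n : ℕ, ∀ m ∉ range (n + 1), wgt β m k * (wgt δ n m * q n) = 0 := by
    intro n m hm
    rw [wgt_zero_of_lt (show n < m by simp only [Finset.mem_range] at hm; omega)]
    ring
  have hrow : ∀ n : ℕ, (∑' m, wgt β m k * (wgt δ n m * q n)) = wgt (β * δ) n k * q n := by
    intro n
    rw [tsum_eq_sum (hrow0 n)]
    have : ∑ m ∈ range (n + 1), wgt β m k * (wgt δ n m * q n)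
        = (∑ m ∈ range (n + 1), wgt β m k * wgt δ n m) * q n := by
      rw [Finset.sum_mul]
      exact Finset.sum_congr rfl fun m _ => by ring
    rw [this, sum_wgt_mul_wgt]
  have hrowS : ∀ n : ℕ, Summable fun m => wgt β m k * (wgt δ n m * q n) := fun n =>
    summable_of_ne_finset_zero (hrow0 n)
  have hbd0 : 0 ≤ β * δ := mul_nonneg hβ0 hδ0
  have hbd1 : β * δ ≤ 1 := by nlinarith
  have hsum2 : Summable fun n => ∑' m, wgt β m k * (wgt δ n m * q n) :=
    (summable_congr hrow).mpr (summable_wgt_mul hbd0 hbd1 hq0 hq k)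
  have hG : Summable (fun x : ℕ × ℕ => wgt β x.2 k * (wgt δ x.1 x.2 * q x.1)) := by
    rw [summable_prod_of_nonneg (fun x => mul_nonneg (wgt_nonneg hβ0 hβ1 _ _)
      (mul_nonneg (wgt_nonneg hδ0 hδ1 _ _) (hq0 _)))]
    exact ⟨hrowS, hsum2⟩
  calc thin β (thin δ q) k = ∑' m, wgt β m k * thin δ q m := thin_eq_tsum β _ k
    _ = ∑' m, ∑' n, wgt β m k * (wgt δ n m * q n) := by
        refine tsum_congr fun m => ?_
        rw [thin_eq_tsum, ← tsum_mul_left]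
    _ = ∑' n, ∑' m, wgt β m k * (wgt δ n m * q n) :=
        Summable.tsum_comm (f := fun n m => wgt β m k * (wgt δ n m * q n)) hG
    _ = ∑' n, wgt (β * δ) n k * q n := tsum_congr hrow
    _ = thin (β * δ) q k := (thin_eq_tsum _ q k).symm

lemma memM_mono {α β : ℝ} (hα : 0 < α) (hαβ : α ≤ β) (hβ : β ≤ 1)
    {p : ℕ → ℝ} (h : MemM α p) : MemM β p := by
  obtain ⟨q, hq, hpq⟩ := h
  have hβ0 : 0 < β := lt_of_lt_of_le hα hαβ
  have hd0 : 0 ≤ α / β := div_nonneg hα.le hβ0.le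
  have hd1 : α / β ≤ 1 := (div_le_one hβ0).mpr hαβ
  refine ⟨thin (α / β) q, isPMF_thin hd0 hd1 hq, fun k => ?_⟩
  rw [thin_comp hβ0.le hβ hd0 hd1 hq.1 hq.2.summable k]
  have : β * (α / β) = α := by field_simp
  rw [this]
  exact hpq k

lemma stmt6_counterexample {α β : ℝ} (hα : 0 < α) (hαβ : α < β) (hβ : β ≤ 1) :
    ∃ p : ℕ → ℝ, IsPMF p ∧ MemM β p ∧ ¬ MemM α p := by
  classical
  set d : ℕ → ℝ := fun n => if n = 1 then 1 else 0 with hd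
  have hdPMF : IsPMF d :=
    ⟨fun n => by by_cases h : n = 1 <;> simp [hd, h],
      by simpa [hd] using hasSum_ite_eq (1 : ℕ) (1 : ℝ)⟩
  have hβ0 : 0 < β := hα.trans hαβ
  have hα1 : α < 1 := lt_of_lt_of_le hαβ hβ
  refine ⟨thin β d, isPMF_thin hβ0.le hβ hdPMF, ⟨d, hdPMF, fun k => rfl⟩, ?_⟩
  rintro ⟨q, hq, hpq⟩
  have hthin : ∀ k, thin β d k = wgt β 1 k := by
    intro k
    rw [thin_eq_tsum, tsum_eq_single 1]
    · simp [hd]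
    · intro n hn; simp [hd, hn]
  have hsummable : ∀ k, Summable fun n => wgt α n k * q n :=
    fun k => summable_wgt_mul hα.le hα1.le hq.1 hq.2.summable k
  have hq2 : ∀ n, 2 ≤ n → q n = 0 := by
    intro n hn
    have h0 : thin β d 2 = 0 := by
      rw [hthin]; exact wgt_zero_of_lt one_lt_two
    have hterm_nonneg : ∀ m, 0 ≤ wgt α m 2 * q m :=
      fun m => mul_nonneg (wgt_nonneg hα.le hα1.le m 2) (hq.1 m)
    have hle : wgt α n 2 * q n ≤ thin α q 2 := by
      rw [thin_eq_tsum]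
      exact Summable.le_tsum (hsummable 2) n fun m _ => hterm_nonneg m
    rw [← hpq 2, h0] at hle
    have heq : wgt α n 2 * q n = 0 := le_antisymm hle (hterm_nonneg n)
    have hwpos : 0 < wgt α n 2 := by
      have hc : 0 < (n.choose 2 : ℝ) := by
        exact_mod_cast Nat.choose_pos hn
      exact mul_pos (mul_pos hc (pow_pos hα 2)) (pow_pos (by linarith) (n - 2))
    have := mul_eq_zero.mp heq
    rcases this with h | h
    · exact absurd h hwpos.ne'
    · exact h
  have h1 : thin α q 1 = wgt α 1 1 * q 1 := by
    rw [thin_eq_tsum, tsum_eq_single 1]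
    intro n hn
    rcases Nat.lt_or_ge n 2 with h | h
    · interval_cases n
      · rw [wgt_zero_of_lt Nat.zero_lt_one, zero_mul]
      · exact absurd rfl hn
    · rw [hq2 n h, mul_zero]
  have hq1le : q 1 ≤ 1 := le_hasSum hq.2 1 fun m _ => hq.1 m
  have hβα : β = α * q 1 := by
    have h := hpq 1
    rw [hthin 1, h1] at h
    simpa [wgt] using h
  nlinarith [hq.1 1]

set_option maxHeartbeats 2000000 in
lemma memM_limit {p : ℕ → ℝ} (hp : IsPMF p) {α : ℝ} (hα0 : 0 < α) (hα1 : α ≤ 1)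
    (h : ∀ γ ∈ Set.Ioc α 1, MemM γ p) : MemM α p := by
  rcases hα1.eq_or_lt with heq | hαlt
  · subst heq
    exact ⟨p, hp, fun k => (thin_one_eq p k).symm⟩
  -- now α < 1
  set γ : ℕ → ℝ := fun j => α + (1 - α) / (j + 1) with hγdef
  have hγmem : ∀ j, γ j ∈ Set.Ioc α 1 := by
    intro j
    have hj1 : (0:ℝ) < (j:ℝ) + 1 := by positivity
    constructor
    · have : 0 < (1 - α) / ((j:ℝ) + 1) := div_pos (by linarith) hj1
      simp only [hγdef]; linarith
    · have h1 : (1 - α) / ((j:ℝ) + 1) ≤ (1 - α) :=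
        div_le_self (by linarith) (by linarith)
      simp only [hγdef]; linarith
  have hγtend : Tendsto γ atTop (𝓝 α) := by
    have h0 : Tendsto (fun j : ℕ => (1 - α) * (1 / ((j:ℝ) + 1))) atTop (𝓝 ((1 - α) * 0)) :=
      tendsto_const_nhds.mul tendsto_one_div_add_atTop_nhds_zero_nat
    rw [mul_zero] at h0
    have h1 : Tendsto (fun j : ℕ => α + (1 - α) * (1 / ((j:ℝ) + 1))) atTop (𝓝 (α + 0)) :=
      tendsto_const_nhds.add h0
    rw [add_zero] at h1
    refine h1.congr fun j => ?_
    simp only [hγdef, mul_one_div]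
  choose Q hQpmf hQthin using fun j => h (γ j) (hγmem j)
  have hS : IsCompact {f : ℕ → ℝ | ∀ k, f k ∈ Set.Icc (0:ℝ) 1} :=
    isCompact_pi_infinite fun _ => isCompact_Icc
  have hQmem : ∀ j, Q j ∈ {f : ℕ → ℝ | ∀ k, f k ∈ Set.Icc (0:ℝ) 1} := by
    intro j k
    exact ⟨(hQpmf j).1 k, le_hasSum (hQpmf j).2 k fun m _ => (hQpmf j).1 m⟩
  obtain ⟨q, hqmem, φ, hφ, hconv⟩ := hS.tendsto_subseq hQmem
  have hqlim : ∀ k, Tendsto (fun j => Q (φ j) k) atTop (𝓝 (q k)) :=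
    fun k => tendsto_pi_nhds.mp hconv k
  have hγ'mem : ∀ j, γ (φ j) ∈ Set.Ioc α 1 := fun j => hγmem _
  have hγ'tend : Tendsto (fun j => γ (φ j)) atTop (𝓝 α) := hγtend.comp hφ.tendsto_atTop
  have hQj0 : ∀ j n, 0 ≤ Q (φ j) n := fun j n => (hQpmf (φ j)).1 n
  have hQjsum : ∀ j, Summable (Q (φ j)) := fun j => (hQpmf (φ j)).2.summable
  have hγj0 : ∀ j, (0:ℝ) ≤ γ (φ j) := fun j => (hα0.trans (hγ'mem j).1).le
  have hγj1 : ∀ j, γ (φ j) ≤ 1 := fun j => (hγ'mem j).2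
  have hwqS : ∀ j k, Summable fun n => wgt (γ (φ j)) n k * Q (φ j) n :=
    fun j k => summable_wgt_mul (hγj0 j) (hγj1 j) (hQj0 j) (hQjsum j) k
  -- tightness
  have tight : ∀ ε : ℝ, 0 < ε → ∃ N : ℕ, ∀ j : ℕ,
      1 - ε ≤ ∑ n ∈ range N, Q (φ j) n := by
    intro ε hε
    have hpsum : Tendsto (fun m => ∑ k ∈ range m, p k) atTop (𝓝 1) := hp.2.tendsto_sum_nat
    obtain ⟨m, hm⟩ := (hpsum.eventually (eventually_ge_nhds
      (by linarith : 1 - ε / 2 < 1))).exists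
    have h1α0 : (0:ℝ) ≤ 1 - α := by linarith
    have h1α1 : 1 - α < 1 := by linarith
    have hbound : Tendsto (fun n : ℕ =>
        ((m:ℝ) * ((1 - α) ^ m)⁻¹) * ((n:ℝ) ^ m * (1 - α) ^ n)) atTop (𝓝 0) := by
      have hgeo := tendsto_pow_const_mul_const_pow_of_lt_one m h1α0 h1α1
      simpa using hgeo.const_mul ((m:ℝ) * ((1 - α) ^ m)⁻¹)
    obtain ⟨N0, hN0⟩ := eventually_atTop.mp
      (hbound.eventually (eventually_le_nhds (by norm_num : (0:ℝ) < 1/2)))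
    set N := max N0 (m + 1) with hN
    refine ⟨N, fun j => ?_⟩
    have hwB : ∀ n, N ≤ n → ∀ γ₀ : ℝ, α ≤ γ₀ → γ₀ ≤ 1 →
        ∑ k ∈ range m, wgt γ₀ n k ≤ 1/2 := by
      intro n hn γ₀ hγa hγb
      have hnm : m + 1 ≤ n := le_trans (le_max_right _ _) hn
      have hn1 : (1:ℝ) ≤ (n:ℝ) := by exact_mod_cast Nat.one_le_iff_ne_zero.mpr (by omega)
      have hterm : ∀ k ∈ range m, wgt γ₀ n k ≤ (n:ℝ) ^ m * (1 - α) ^ (n - m) := by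
        intro k hk
        have hk' : k < m := Finset.mem_range.mp hk
        have hc : (n.choose k : ℝ) ≤ (n:ℝ) ^ k := by
          exact_mod_cast Nat.choose_le_pow n k
        have hγ₀k : γ₀ ^ k ≤ 1 := pow_le_one₀ (by linarith) hγb
        have hpw1 : (1 - γ₀) ^ (n - k) ≤ (1 - α) ^ (n - k) :=
          pow_le_pow_left₀ (by linarith) (by linarith) _
        have hpw2 : (1 - α) ^ (n - k) ≤ (1 - α) ^ (n - m) :=
          pow_le_pow_of_le_one h1α0 (by linarith) (by omega)
        have hnk : (n:ℝ) ^ k ≤ (n:ℝ) ^ m := pow_le_pow_right₀ hn1 (le_of_lt hk')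
        have hw1 : wgt γ₀ n k ≤ (n:ℝ) ^ k * (1 - α) ^ (n - k) := by
          simp only [wgt]
          have h1 : (n.choose k : ℝ) * γ₀ ^ k ≤ (n:ℝ) ^ k := by
            calc (n.choose k : ℝ) * γ₀ ^ k ≤ (n.choose k : ℝ) * 1 :=
                  mul_le_mul_of_nonneg_left hγ₀k (by positivity)
              _ = (n.choose k : ℝ) := mul_one _
              _ ≤ (n:ℝ) ^ k := hc
          calc (n.choose k : ℝ) * γ₀ ^ k * (1 - γ₀) ^ (n - k)
              ≤ (n.choose k : ℝ) * γ₀ ^ k * (1 - α) ^ (n - k) :=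
                mul_le_mul_of_nonneg_left hpw1
                  (mul_nonneg (by positivity) (pow_nonneg (by linarith) _))
            _ ≤ (n:ℝ) ^ k * (1 - α) ^ (n - k) :=
                mul_le_mul_of_nonneg_right h1 (pow_nonneg h1α0 _)
        calc wgt γ₀ n k ≤ (n:ℝ) ^ k * (1 - α) ^ (n - k) := hw1
          _ ≤ (n:ℝ) ^ m * (1 - α) ^ (n - m) := by
              apply mul_le_mul hnk hpw2 (pow_nonneg h1α0 _) (by positivity)
      have hsumle : ∑ k ∈ range m, wgt γ₀ n k ≤ (m:ℝ) * ((n:ℝ) ^ m * (1 - α) ^ (n - m)) := by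
        calc ∑ k ∈ range m, wgt γ₀ n k ≤ ∑ _k ∈ range m, (n:ℝ) ^ m * (1 - α) ^ (n - m) :=
              Finset.sum_le_sum hterm
          _ = (m:ℝ) * ((n:ℝ) ^ m * (1 - α) ^ (n - m)) := by
              rw [Finset.sum_const, Finset.card_range, nsmul_eq_mul]
      have h1αne : (1 - α) ≠ 0 := by linarith
      have hpowsub : (1 - α) ^ (n - m) = (1 - α) ^ n * ((1 - α) ^ m)⁻¹ :=
        pow_sub₀ (1 - α) h1αne (by omega)
      have heq2 : (m:ℝ) * ((n:ℝ) ^ m * (1 - α) ^ (n - m))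
          = ((m:ℝ) * ((1 - α) ^ m)⁻¹) * ((n:ℝ) ^ m * (1 - α) ^ n) := by
        rw [hpowsub]; ring
      have hN0' := hN0 n (le_trans (le_max_left _ _) hn)
      calc ∑ k ∈ range m, wgt γ₀ n k ≤ (m:ℝ) * ((n:ℝ) ^ m * (1 - α) ^ (n - m)) := hsumle
        _ = ((m:ℝ) * ((1 - α) ^ m)⁻¹) * ((n:ℝ) ^ m * (1 - α) ^ n) := heq2
        _ ≤ 1/2 := hN0'
    -- main inequality for fixed j
    set γj := γ (φ j) with hγj
    set Qj := Q (φ j) with hQj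
    have hs1 : ∑ k ∈ range m, p k = ∑' n, (∑ k ∈ range m, wgt γj n k) * Qj n := by
      calc ∑ k ∈ range m, p k = ∑ k ∈ range m, ∑' n, wgt γj n k * Qj n :=
            Finset.sum_congr rfl fun k _ => by rw [hQthin (φ j) k, thin_eq_tsum]
        _ = ∑' n, ∑ k ∈ range m, wgt γj n k * Qj n :=
            (Summable.tsum_finsetSum fun k _ => hwqS j k).symm
        _ = ∑' n, (∑ k ∈ range m, wgt γj n k) * Qj n :=
            tsum_congr fun n => (Finset.sum_mul _ _ _).symm
    set B : ℕ → ℝ := fun n => ∑ k ∈ range m, wgt γj n k with hB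
    have hB0 : ∀ n, 0 ≤ B n := fun n =>
      Finset.sum_nonneg fun k _ => wgt_nonneg (hγj0 j) (hγj1 j) n k
    have hB1 : ∀ n, B n ≤ 1 := by
      intro n
      have hsub : range m ⊆ range (max m (n + 1)) :=
        Finset.range_subset_range.mpr (le_max_left _ _)
      have h1 : B n ≤ ∑ k ∈ range (max m (n + 1)), wgt γj n k :=
        Finset.sum_le_sum_of_subset_of_nonneg hsub
          (fun k _ _ => wgt_nonneg (hγj0 j) (hγj1 j) n k)
      have h2 : ∑ k ∈ range (n + 1), wgt γj n k = ∑ k ∈ range (max m (n + 1)), wgt γj n k := by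
        apply Finset.sum_subset (Finset.range_subset_range.mpr (le_max_right _ _))
        intro x _ hx2
        exact wgt_zero_of_lt (show n < x by simp only [Finset.mem_range, not_lt] at hx2; omega)
      rw [← h2, sum_wgt] at h1
      exact h1
    have hBsum : Summable fun n => B n * Qj n :=
      Summable.of_nonneg_of_le (fun n => mul_nonneg (hB0 n) (hQj0 j n))
        (fun n => mul_le_of_le_one_left (hQj0 j n) (hB1 n)) (hQjsum j)
    have hsplitB := Summable.sum_add_tsum_nat_add (f := fun n => B n * Qj n) N hBsum
    have hsplitQ := Summable.sum_add_tsum_nat_add (f := Qj) N (hQjsum j)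
    have hQtot : ∑' n, Qj n = 1 := (hQpmf (φ j)).2.tsum_eq
    have hQtailsum : Summable fun i => Qj (i + N) := (summable_nat_add_iff N).mpr (hQjsum j)
    have hBtailsum : Summable fun i => B (i + N) * Qj (i + N) :=
      (summable_nat_add_iff N).mpr hBsum
    have htail_le : ∑' i, B (i + N) * Qj (i + N) ≤ ∑' i, (1/2) * Qj (i + N) := by
      apply Summable.tsum_le_tsum _ hBtailsum (hQtailsum.mul_left _)
      intro i
      apply mul_le_mul_of_nonneg_right _ (hQj0 j (i + N))
      exact hwB (i + N) (Nat.le_add_left N i) γj (hγ'mem j).1.le (hγ'mem j).2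
    rw [tsum_mul_left] at htail_le
    have hhead_le : ∑ n ∈ range N, B n * Qj n ≤ ∑ n ∈ range N, Qj n :=
      Finset.sum_le_sum fun n _ => mul_le_of_le_one_left (hQj0 j n) (hB1 n)
    have hQtail_nonneg : 0 ≤ ∑' i, Qj (i + N) := tsum_nonneg fun i => hQj0 j (i + N)
    rw [hQtot] at hsplitQ
    rw [← hs1] at hsplitB
    linarith [hm]
  -- properties of the limit q
  have hq0 : ∀ k, 0 ≤ q k := fun k => (hqmem k).1
  have hqpartial_le : ∀ N, ∑ n ∈ range N, q n ≤ 1 := by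
    intro N
    have hlim : Tendsto (fun j => ∑ n ∈ range N, Q (φ j) n) atTop
        (𝓝 (∑ n ∈ range N, q n)) := tendsto_finset_sum _ fun n _ => hqlim n
    exact le_of_tendsto hlim (Eventually.of_forall fun j =>
      sum_le_hasSum _ (fun n _ => hQj0 j n) (hQpmf (φ j)).2)
  have hqsummable : Summable q := summable_of_sum_range_le hq0 hqpartial_le
  have hqpartial_ge : ∀ ε : ℝ, 0 < ε → ∃ N, ∀ N', N ≤ N' → 1 - ε ≤ ∑ n ∈ range N', q n := by
    intro ε hε
    obtain ⟨N, hN⟩ := tight ε hε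
    refine ⟨N, fun N' hN' => ?_⟩
    have hlim : Tendsto (fun j => ∑ n ∈ range N', Q (φ j) n) atTop
        (𝓝 (∑ n ∈ range N', q n)) := tendsto_finset_sum _ fun n _ => hqlim n
    refine ge_of_tendsto hlim (Eventually.of_forall fun j => ?_)
    calc 1 - ε ≤ ∑ n ∈ range N, Q (φ j) n := hN j
      _ ≤ ∑ n ∈ range N', Q (φ j) n :=
          Finset.sum_le_sum_of_subset_of_nonneg (Finset.range_subset_range.mpr hN')
            (fun n _ _ => hQj0 j n)
  have hqtsum : ∑' n, q n = 1 := by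
    apply le_antisymm
    · exact Real.tsum_le_of_sum_range_le hq0 hqpartial_le
    · refine le_of_forall_pos_le_add fun ε hε => ?_
      obtain ⟨N, hN⟩ := hqpartial_ge ε hε
      have h1 : 1 - ε ≤ ∑ n ∈ range N, q n := hN N le_rfl
      have h2 : ∑ n ∈ range N, q n ≤ ∑' n, q n :=
        Summable.sum_le_tsum _ (fun n _ => hq0 n) hqsummable
      linarith
  have hqPMF : IsPMF q := ⟨hq0, hqtsum ▸ hqsummable.hasSum⟩
  refine ⟨q, hqPMF, fun k => ?_⟩
  -- show p k = thin α q k via ε-argument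
  have key : ∀ ε : ℝ, 0 < ε → |p k - thin α q k| ≤ 2 * ε := by
    intro ε hε
    obtain ⟨N0, hN0⟩ := tight ε hε
    obtain ⟨N1, hN1⟩ := hqpartial_ge ε hε
    set N := max N0 N1 with hNdef
    have hN : ∀ j, 1 - ε ≤ ∑ n ∈ range N, Q (φ j) n := by
      intro j
      calc 1 - ε ≤ ∑ n ∈ range N0, Q (φ j) n := hN0 j
        _ ≤ ∑ n ∈ range N, Q (φ j) n :=
            Finset.sum_le_sum_of_subset_of_nonneg
              (Finset.range_subset_range.mpr (le_max_left _ _)) (fun n _ _ => hQj0 j n)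
    have hheadq : 1 - ε ≤ ∑ n ∈ range N, q n := hN1 N (le_max_right _ _)
    set head : ℝ := ∑ n ∈ range N, wgt α n k * q n with hhead
    have hwcont : ∀ n : ℕ, Tendsto (fun j => wgt (γ (φ j)) n k) atTop (𝓝 (wgt α n k)) := by
      intro n
      have hc : Continuous fun γ₀ : ℝ => wgt γ₀ n k := by
        unfold wgt; continuity
      exact (hc.tendsto α).comp hγ'tend
    have hheadlim : Tendsto (fun j => ∑ n ∈ range N, wgt (γ (φ j)) n k * Q (φ j) n)
        atTop (𝓝 head) :=
      tendsto_finset_sum _ fun n _ => (hwcont n).mul (hqlim n)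
    have htailj : ∀ j, 0 ≤ p k - ∑ n ∈ range N, wgt (γ (φ j)) n k * Q (φ j) n ∧
        p k - ∑ n ∈ range N, wgt (γ (φ j)) n k * Q (φ j) n ≤ ε := by
      intro j
      have hsplit := Summable.sum_add_tsum_nat_add
        (f := fun n => wgt (γ (φ j)) n k * Q (φ j) n) N (hwqS j k)
      have hpk : p k = ∑' n, wgt (γ (φ j)) n k * Q (φ j) n := by
        rw [hQthin (φ j) k, thin_eq_tsum]
      have htailsum : Summable fun i => wgt (γ (φ j)) (i + N) k * Q (φ j) (i + N) :=
        (summable_nat_add_iff N).mpr (hwqS j k)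
      have hQtailsum : Summable fun i => Q (φ j) (i + N) :=
        (summable_nat_add_iff N).mpr (hQjsum j)
      have htail0 : 0 ≤ ∑' i, wgt (γ (φ j)) (i + N) k * Q (φ j) (i + N) :=
        tsum_nonneg fun i => mul_nonneg (wgt_nonneg (hγj0 j) (hγj1 j) _ _) (hQj0 j _)
      have htail1 : ∑' i, wgt (γ (φ j)) (i + N) k * Q (φ j) (i + N)
          ≤ ∑' i, Q (φ j) (i + N) := by
        apply Summable.tsum_le_tsum _ htailsum hQtailsum
        intro i
        exact mul_le_of_le_one_left (hQj0 j _) (wgt_le_one (hγj0 j) (hγj1 j) _ _)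
      have hsplitQ := Summable.sum_add_tsum_nat_add (f := Q (φ j)) N (hQjsum j)
      rw [(hQpmf (φ j)).2.tsum_eq] at hsplitQ
      have hhd := hN j
      constructor
      · rw [hpk, ← hsplit]; linarith
      · rw [hpk, ← hsplit]; linarith
    have h1a : 0 ≤ p k - head :=
      ge_of_tendsto (tendsto_const_nhds.sub hheadlim)
        (Eventually.of_forall fun j => (htailj j).1)
    have h1b : p k - head ≤ ε :=
      le_of_tendsto (tendsto_const_nhds.sub hheadlim)
        (Eventually.of_forall fun j => (htailj j).2)
    -- thin α q k vs head
    have hwqS' : Summable fun n => wgt α n k * q n :=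
      summable_wgt_mul hα0.le hαlt.le hq0 hqsummable k
    have hsplitq := Summable.sum_add_tsum_nat_add (f := fun n => wgt α n k * q n) N hwqS'
    have hqtailsum : Summable fun i => q (i + N) := (summable_nat_add_iff N).mpr hqsummable
    have hwtailsum : Summable fun i => wgt α (i + N) k * q (i + N) :=
      (summable_nat_add_iff N).mpr hwqS'
    have h2a : 0 ≤ thin α q k - head := by
      rw [thin_eq_tsum, ← hsplitq]
      have : 0 ≤ ∑' i, wgt α (i + N) k * q (i + N) :=
        tsum_nonneg fun i => mul_nonneg (wgt_nonneg hα0.le hαlt.le _ _) (hq0 _)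
      simp only [hhead]
      linarith
    have h2b : thin α q k - head ≤ ε := by
      rw [thin_eq_tsum, ← hsplitq]
      have ht1 : ∑' i, wgt α (i + N) k * q (i + N) ≤ ∑' i, q (i + N) := by
        apply Summable.tsum_le_tsum _ hwtailsum hqtailsum
        intro i
        exact mul_le_of_le_one_left (hq0 _) (wgt_le_one hα0.le hαlt.le _ _)
      have hsplitq2 := Summable.sum_add_tsum_nat_add (f := q) N hqsummable
      rw [hqtsum] at hsplitq2
      simp only [hhead]
      linarith
    rw [abs_le]
    constructor <;> linarith
  have habs : |p k - thin α q k| ≤ 0 := by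
    by_contra hlt
    push_neg at hlt
    have := key (|p k - thin α q k| / 4) (by linarith)
    linarith
  have := le_antisymm habs (abs_nonneg _)
  have := abs_eq_zero.mp this
  linarith [this]

end Stmt6Aux

/-- `M_{α+} = M_α` for `α ∈ (0,1]`, and `M_α ⊊ M_β` for `0 < α < β ≤ 1`. -/
theorem stmt_6 :
    (∀ (p : ℕ → ℝ), IsPMF p → ∀ α ∈ Set.Ioc (0:ℝ) 1,
        (∀ γ ∈ Set.Ioc α 1, MemM γ p) → MemM α p) ∧
    (∀ α β : ℝ, 0 < α → α < β → β ≤ 1 →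
        (∀ p : ℕ → ℝ, IsPMF p → MemM α p → MemM β p) ∧
          ∃ p : ℕ → ℝ, IsPMF p ∧ MemM β p ∧ ¬ MemM α p) := by
  constructor
  · intro p hp α hα h
    exact memM_limit hp hα.1 hα.2 h
  · intro α β hα hαβ hβ
    exact ⟨fun p _hp h => memM_mono hα hαβ.le hβ h, stmt6_counterexample hα hαβ hβ⟩
end

section
/- For a nonnegative integer-valued random variable X and α ∈ [0,1], ρ(α∘X) = α·ρ(X), where ρ(X) = inf{β ∈ [0,1] : X ∈ M_β}. -/
open scoped BigOperators

namespace Stmt8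

open scoped ENNReal NNReal
open Set Filter

/-! ### ENNReal-valued thinning -/

/-- ENNReal-valued thinning. -/
noncomputable def thinE (A : ℝ≥0∞) (P : ℕ → ℝ≥0∞) (k : ℕ) : ℝ≥0∞ :=
  ∑' n : ℕ, (n.choose k : ℝ≥0∞) * A ^ k * (1 - A) ^ (n - k) * P n

lemma binom_sum (X Y : ℝ≥0∞) (n : ℕ) :
    ∑' k : ℕ, (n.choose k : ℝ≥0∞) * X ^ k * Y ^ (n - k) = (X + Y) ^ n := by
  rw [tsum_eq_sum (s := Finset.range (n + 1))
    (f := fun k => (n.choose k : ℝ≥0∞) * X ^ k * Y ^ (n - k)) ?_]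
  · rw [add_pow]
    exact Finset.sum_congr rfl fun k _ => by ring
  · intro k hk
    have hnk : n < k := by simpa using hk
    simp [Nat.choose_eq_zero_of_lt hnk]

lemma tsum_thinE {A : ℝ≥0∞} (hA : A ≤ 1) (P : ℕ → ℝ≥0∞) :
    ∑' k, thinE A P k = ∑' n, P n := by
  have h1 : A + (1 - A) = 1 := add_tsub_cancel_of_le hA
  calc ∑' k, thinE A P k
      = ∑' k, ∑' n, (n.choose k : ℝ≥0∞) * A ^ k * (1 - A) ^ (n - k) * P n := rfl
    _ = ∑' n, ∑' k, (n.choose k : ℝ≥0∞) * A ^ k * (1 - A) ^ (n - k) * P n :=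
        ENNReal.tsum_comm
    _ = ∑' n, P n := by
        refine tsum_congr fun n => ?_
        rw [ENNReal.tsum_mul_right, binom_sum, h1, one_pow, one_mul]

/-- Generating-function identity for ENNReal thinning. -/
lemma thinE_gen (A T : ℝ≥0∞) (P : ℕ → ℝ≥0∞) :
    ∑' k, thinE A P k * T ^ k = ∑' n, P n * (A * T + (1 - A)) ^ n := by
  calc ∑' k, thinE A P k * T ^ k
      = ∑' k, ∑' n, ((n.choose k : ℝ≥0∞) * (A * T) ^ k * (1 - A) ^ (n - k)) * P n := by
        refine tsum_congr fun k => ?_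
        rw [thinE, ← ENNReal.tsum_mul_right]
        refine tsum_congr fun n => ?_
        rw [mul_pow]; ring
    _ = ∑' n, ∑' k, ((n.choose k : ℝ≥0∞) * (A * T) ^ k * (1 - A) ^ (n - k)) * P n :=
        ENNReal.tsum_comm
    _ = ∑' n, P n * (A * T + (1 - A)) ^ n := by
        refine tsum_congr fun n => ?_
        rw [ENNReal.tsum_mul_right, binom_sum, mul_comm]

/-- The key finite combinatorial identity, in any commutative semiring. -/
lemma comb {R : Type*} [CommSemiring R] (x y u v : R) (n k : ℕ) :
    ∑ m ∈ Finset.range (n + 1),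
      (m.choose k : R) * (n.choose m : R) * x ^ k * y ^ (m - k) * u ^ m * v ^ (n - m)
    = (n.choose k : R) * (x * u) ^ k * (y * u + v) ^ (n - k) := by
  rcases le_or_gt k n with hk | hk
  · have hsub : Finset.Ico k (n + 1) ⊆ Finset.range (n + 1) := by
      intro m hm
      simp only [Finset.mem_Ico] at hm
      simpa using hm.2
    have hzero : ∀ m ∈ Finset.range (n + 1), m ∉ Finset.Ico k (n + 1) →
        (m.choose k : R) * (n.choose m : R) * x ^ k * y ^ (m - k) * u ^ m * v ^ (n - m) = 0 := by
      intro m hm hm'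
      have hmk : m < k := by
        simp only [Finset.mem_range] at hm
        simp only [Finset.mem_Ico, not_and, not_lt] at hm'
        omega
      rw [Nat.choose_eq_zero_of_lt hmk]
      simp
    rw [← Finset.sum_subset hsub hzero, Finset.sum_Ico_eq_sum_range,
      show n + 1 - k = n - k + 1 by omega]
    calc ∑ j ∈ Finset.range (n - k + 1),
          ((k + j).choose k : R) * (n.choose (k + j) : R) * x ^ k * y ^ (k + j - k) *
            u ^ (k + j) * v ^ (n - (k + j))
        = ∑ j ∈ Finset.range (n - k + 1),
            ((n.choose k : R) * x ^ k * u ^ k) *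
              (((n - k).choose j : R) * (y * u) ^ j * v ^ (n - k - j)) := by
          refine Finset.sum_congr rfl fun j hj => ?_
          have hjle : j ≤ n - k := Nat.lt_succ_iff.mp (Finset.mem_range.mp hj)
          have hkjn : k + j ≤ n := by omega
          have hch : n.choose (k + j) * (k + j).choose k
              = n.choose k * (n - k).choose (k + j - k) :=
            Nat.choose_mul (Nat.le_add_right k j)
          rw [show k + j - k = j by omega] at hch
          have hch' : ((k + j).choose k : R) * (n.choose (k + j) : R)
              = (n.choose k : R) * ((n - k).choose j : R) := by
            calc ((k + j).choose k : R) * (n.choose (k + j) : R)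
                = ((n.choose (k + j) * (k + j).choose k : ℕ) : R) := by push_cast; ring
              _ = ((n.choose k * (n - k).choose j : ℕ) : R) := by rw [hch]
              _ = (n.choose k : R) * ((n - k).choose j : R) := by push_cast; ring
          rw [show k + j - k = j by omega, show n - (k + j) = n - k - j by omega, hch',
            pow_add]
          ring
      _ = ((n.choose k : R) * x ^ k * u ^ k) *
            ∑ j ∈ Finset.range (n - k + 1),
              ((n - k).choose j : R) * (y * u) ^ j * v ^ (n - k - j) := by
          rw [Finset.mul_sum]
      _ = (n.choose k : R) * (x * u) ^ k * (y * u + v) ^ (n - k) := by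
          rw [show ∑ j ∈ Finset.range (n - k + 1),
              ((n - k).choose j : R) * (y * u) ^ j * v ^ (n - k - j) = (y * u + v) ^ (n - k) by
            rw [add_pow]; exact Finset.sum_congr rfl fun j _ => by ring]
          rw [mul_pow]; ring
  · have h0 : (n.choose k : R) = 0 := by
      rw [Nat.choose_eq_zero_of_lt hk]; exact Nat.cast_zero
    rw [h0, zero_mul, zero_mul]
    refine Finset.sum_eq_zero fun m hm => ?_
    have hmk : m < k := by
      simp only [Finset.mem_range] at hm; omega
    rw [Nat.choose_eq_zero_of_lt hmk]
    simp

/-- Composition of ENNReal thinnings. -/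
lemma thinE_comp {A B : ℝ≥0∞} (hA : A ≤ 1) (hB : B ≤ 1) (P : ℕ → ℝ≥0∞) (k : ℕ) :
    thinE A (thinE B P) k = thinE (A * B) P k := by
  have hBA : (1 - A) * B + (1 - B) = 1 - A * B := by
    have hAB : A * B ≠ ∞ := ((mul_le_one' hA hB).trans_lt ENNReal.one_lt_top).ne
    refine ENNReal.eq_sub_of_add_eq hAB ?_
    calc (1 - A) * B + (1 - B) + A * B = ((1 - A) * B + A * B) + (1 - B) := by ring
      _ = ((1 - A) + A) * B + (1 - B) := by rw [add_mul]
      _ = B + (1 - B) := by rw [tsub_add_cancel_of_le hA, one_mul]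
      _ = 1 := add_tsub_cancel_of_le hB
  have lhs : thinE A (thinE B P) k
      = ∑' m, ∑' n, ((m.choose k : ℝ≥0∞) * (n.choose m : ℝ≥0∞) * A ^ k * (1 - A) ^ (m - k) *
          B ^ m * (1 - B) ^ (n - m)) * P n := by
    rw [thinE]
    refine tsum_congr fun m => ?_
    rw [thinE, ← ENNReal.tsum_mul_left]
    refine tsum_congr fun n => ?_
    ring
  rw [lhs, ENNReal.tsum_comm, thinE]
  refine tsum_congr fun n => ?_
  rw [ENNReal.tsum_mul_right]
  rw [tsum_eq_sum (s := Finset.range (n + 1)) ?_]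
  · rw [comb, hBA]
  · intro m hm
    have hnm : n < m := by simpa using hm
    rw [Nat.choose_eq_zero_of_lt hnm]
    simp

/-! ### Bridging between `thin` and `thinE` -/

/-- ENNReal version of a real pmf. -/
noncomputable def pE (p : ℕ → ℝ) : ℕ → ℝ≥0∞ := fun n => ENNReal.ofReal (p n)

lemma thinE_pE_eq {p : ℕ → ℝ} {α : ℝ} (hp0 : ∀ n, 0 ≤ p n) (h0 : 0 ≤ α) (h1 : α ≤ 1)
    (k : ℕ) :
    thinE (ENNReal.ofReal α) (pE p) k
      = ∑' n, ENNReal.ofReal ((n.choose k : ℝ) * α ^ k * (1 - α) ^ (n - k) * p n) := by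
  refine tsum_congr fun n => ?_
  have hA : (1 : ℝ≥0∞) - ENNReal.ofReal α = ENNReal.ofReal (1 - α) := by
    rw [ENNReal.ofReal_sub 1 h0, ENNReal.ofReal_one]
  have hc : (0:ℝ) ≤ (n.choose k : ℝ) := Nat.cast_nonneg _
  have hαk : (0:ℝ) ≤ α ^ k := pow_nonneg h0 _
  have h1α : (0:ℝ) ≤ (1 - α) ^ (n - k) := pow_nonneg (by linarith) _
  rw [hA, pE]
  rw [ENNReal.ofReal_mul (mul_nonneg (mul_nonneg hc hαk) h1α),
    ENNReal.ofReal_mul (mul_nonneg hc hαk),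
    ENNReal.ofReal_mul hc, ENNReal.ofReal_pow h0,
    ENNReal.ofReal_pow (by linarith), ENNReal.ofReal_natCast]

lemma thin_toReal {p : ℕ → ℝ} {α : ℝ} (hp0 : ∀ n, 0 ≤ p n) (h0 : 0 ≤ α) (h1 : α ≤ 1)
    (k : ℕ) :
    thin α p k = (thinE (ENNReal.ofReal α) (pE p) k).toReal := by
  rw [thinE_pE_eq hp0 h0 h1, ENNReal.tsum_toReal_eq fun n => ENNReal.ofReal_ne_top]
  refine tsum_congr fun n => ?_
  refine (ENNReal.toReal_ofReal ?_).symm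
  exact mul_nonneg (mul_nonneg (mul_nonneg (Nat.cast_nonneg _) (pow_nonneg h0 _))
    (pow_nonneg (by linarith) _)) (hp0 n)

lemma sum_pE {p : ℕ → ℝ} (hp : IsPMF p) : ∑' n, pE p n = 1 := by
  have h := ENNReal.ofReal_tsum_of_nonneg hp.1 hp.2.summable
  rw [hp.2.tsum_eq] at h
  simpa [pE] using h.symm

lemma thinE_le_one {A : ℝ≥0∞} (hA : A ≤ 1) {P : ℕ → ℝ≥0∞} (hP : ∑' n, P n = 1) (k : ℕ) :
    thinE A P k ≤ 1 := by
  calc thinE A P k ≤ ∑' k, thinE A P k := ENNReal.le_tsum k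
    _ = 1 := by rw [tsum_thinE hA, hP]

lemma thinE_ne_top {A : ℝ≥0∞} (hA : A ≤ 1) {P : ℕ → ℝ≥0∞} (hP : ∑' n, P n = 1) (k : ℕ) :
    thinE A P k ≠ ∞ :=
  ((thinE_le_one hA hP k).trans_lt ENNReal.one_lt_top).ne

lemma thin_ofReal {p : ℕ → ℝ} {α : ℝ} (hp : IsPMF p) (h0 : 0 ≤ α) (h1 : α ≤ 1) (k : ℕ) :
    ENNReal.ofReal (thin α p k) = thinE (ENNReal.ofReal α) (pE p) k := by
  rw [thin_toReal hp.1 h0 h1,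
    ENNReal.ofReal_toReal (thinE_ne_top (ENNReal.ofReal_le_one.2 h1) (sum_pE hp) k)]

/-- Thinning a pmf gives a pmf. -/
lemma isPMF_thin {α : ℝ} (hα : α ∈ Set.Icc (0:ℝ) 1) {p : ℕ → ℝ} (hp : IsPMF p) :
    IsPMF (thin α p) := by
  have hA : ENNReal.ofReal α ≤ 1 := ENNReal.ofReal_le_one.2 hα.2
  have hsum : ∑' k, thinE (ENNReal.ofReal α) (pE p) k = 1 := by
    rw [tsum_thinE hA, sum_pE hp]
  have hne : ∀ k, thinE (ENNReal.ofReal α) (pE p) k ≠ ∞ :=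
    thinE_ne_top hA (sum_pE hp)
  have he : thin α p = fun k => (thinE (ENNReal.ofReal α) (pE p) k).toReal :=
    funext fun k => thin_toReal hp.1 hα.1 hα.2 k
  constructor
  · intro k; rw [he]; exact ENNReal.toReal_nonneg
  · have hs : Summable fun k => (thinE (ENNReal.ofReal α) (pE p) k).toReal :=
      ENNReal.summable_toReal (by rw [hsum]; exact ENNReal.one_ne_top)
    have ht : ∑' k, (thinE (ENNReal.ofReal α) (pE p) k).toReal = 1 := by
      rw [← ENNReal.tsum_toReal_eq hne, hsum, ENNReal.toReal_one]
    rw [he]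
    exact ht ▸ hs.hasSum

/-- Thinning by 1 is the identity. -/
lemma thin_one (p : ℕ → ℝ) : thin 1 p = p := by
  funext k
  rw [thin, tsum_eq_single k ?_]
  · simp
  · intro n hn
    rcases lt_or_gt_of_ne hn with h | h
    · rw [Nat.choose_eq_zero_of_lt h]; simp
    · have hnk : n - k ≠ 0 := by omega
      rw [sub_self, zero_pow hnk]; ring

/-- Composition of thinnings. -/
lemma thin_comp {α β : ℝ} (hα : α ∈ Set.Icc (0:ℝ) 1) (hβ : β ∈ Set.Icc (0:ℝ) 1)
    {q : ℕ → ℝ} (hq : IsPMF q) : thin α (thin β q) = thin (α * β) q := by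
  funext k
  have hq' : IsPMF (thin β q) := isPMF_thin hβ hq
  have hpe : pE (thin β q) = thinE (ENNReal.ofReal β) (pE q) :=
    funext fun n => thin_ofReal hq hβ.1 hβ.2 n
  rw [thin_toReal hq'.1 hα.1 hα.2, hpe,
    thinE_comp (ENNReal.ofReal_le_one.2 hα.2) (ENNReal.ofReal_le_one.2 hβ.2),
    ← ENNReal.ofReal_mul hα.1,
    ← thin_toReal hq.1 (mul_nonneg hα.1 hβ.1) (mul_le_one₀ hα.2 hβ.1 hβ.2)]

/-! ### Generating functions and injectivity of thinning -/

/-- Probability generating function. -/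
noncomputable def gen (p : ℕ → ℝ) (t : ℝ) : ℝ := ∑' n, p n * t ^ n

/-- The associated formal multilinear series. -/
noncomputable def fms (p : ℕ → ℝ) : FormalMultilinearSeries ℝ ℝ ℝ :=
  fun n => ContinuousMultilinearMap.mkPiRing ℝ (Fin n) (p n)

lemma pmf_le_one {p : ℕ → ℝ} (hp : IsPMF p) (n : ℕ) : p n ≤ 1 := by
  have h := hp.2.summable.le_tsum n fun j _ => hp.1 j
  rwa [hp.2.tsum_eq] at h

lemma hasFPS {p : ℕ → ℝ} (hp : IsPMF p) :
    HasFPowerSeriesOnBall (gen p) (fms p) 0 1 := by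
  refine ⟨?_, zero_lt_one, ?_⟩
  · have h := FormalMultilinearSeries.le_radius_of_bound (fms p) 1 (r := 1) ?_
    · simpa using h
    · intro n
      have : ‖fms p n‖ = |p n| := by
        rw [fms, ContinuousMultilinearMap.norm_mkPiRing, Real.norm_eq_abs]
      rw [this]
      have h1 : |p n| ≤ 1 := abs_le.2 ⟨by linarith [hp.1 n], pmf_le_one hp n⟩
      calc |p n| * (1:ℝ≥0).1 ^ n = |p n| := by norm_num
        _ ≤ 1 := h1
  · intro y hy
    have hy' : ‖y‖ < 1 := by
      rw [mem_emetric_ball_zero_iff, ← ofReal_norm, ENNReal.ofReal_lt_one] at hy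
      exact_mod_cast hy
    have hs : Summable fun n => p n * y ^ n := by
      refine Summable.of_norm_bounded (summable_geometric_of_lt_one (norm_nonneg y) hy') ?_
      intro n
      rw [norm_mul, norm_pow]
      calc ‖p n‖ * ‖y‖ ^ n ≤ 1 * ‖y‖ ^ n := by
            refine mul_le_mul_of_nonneg_right ?_ (by positivity)
            rw [Real.norm_eq_abs]
            exact abs_le.2 ⟨by linarith [hp.1 n], pmf_le_one hp n⟩
        _ = ‖y‖ ^ n := one_mul _
    have hsum : HasSum (fun n => p n * y ^ n) (gen p y) := hs.hasSum
    rw [zero_add]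
    have : (fun n => (fms p n) fun _ => y) = fun n => p n * y ^ n := by
      funext n
      rw [fms, ContinuousMultilinearMap.mkPiRing_apply]
      simp [smul_eq_mul, mul_comm]
    rw [this]
    exact hsum

lemma gen_toReal {p : ℕ → ℝ} (hp0 : ∀ n, 0 ≤ p n) {t : ℝ} (ht : 0 ≤ t) :
    gen p t = (∑' n, pE p n * (ENNReal.ofReal t) ^ n).toReal := by
  rw [ENNReal.tsum_toReal_eq fun n => by
    exact ENNReal.mul_ne_top ENNReal.ofReal_ne_top (ENNReal.pow_ne_top ENNReal.ofReal_ne_top)]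
  refine tsum_congr fun n => ?_
  rw [pE, ENNReal.toReal_mul, ENNReal.toReal_pow, ENNReal.toReal_ofReal (hp0 n),
    ENNReal.toReal_ofReal ht]

/-- Injectivity of thinning with positive parameter. -/
lemma thin_inj {α : ℝ} (h0 : 0 < α) (h1 : α ≤ 1) {p p' : ℕ → ℝ}
    (hp : IsPMF p) (hp' : IsPMF p') (h : ∀ k, thin α p k = thin α p' k) : p = p' := by
  have hA1 : ENNReal.ofReal α ≤ 1 := ENNReal.ofReal_le_one.2 h1
  have hthE : ∀ k, thinE (ENNReal.ofReal α) (pE p) k = thinE (ENNReal.ofReal α) (pE p') k := by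
    intro k
    rw [← thin_ofReal hp h0.le h1, ← thin_ofReal hp' h0.le h1, h k]
  -- agreement of the generating functions on `Ioo (1-α) 1`
  have key : ∀ t ∈ Set.Ioo (1 - α) 1, gen p t = gen p' t := by
    intro t ht
    have ht1 : 1 - α < t := ht.1
    have ht0 : 0 ≤ t := le_of_lt (lt_of_le_of_lt (by linarith) ht.1)
    set s : ℝ := (t - (1 - α)) / α with hs
    have hs0 : 0 ≤ s := div_nonneg (by linarith) h0.le
    have hst : α * s = t - (1 - α) := by
      rw [hs]; field_simp
    have hX : ENNReal.ofReal α * ENNReal.ofReal s + (1 - ENNReal.ofReal α)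
        = ENNReal.ofReal t := by
      rw [← ENNReal.ofReal_mul h0.le, hst,
        show (1:ℝ≥0∞) - ENNReal.ofReal α = ENNReal.ofReal (1 - α) by
          rw [ENNReal.ofReal_sub 1 h0.le, ENNReal.ofReal_one],
        ← ENNReal.ofReal_add (by linarith) (by linarith)]
      norm_num
    have e1 : ∑' n, pE p n * (ENNReal.ofReal t) ^ n
        = ∑' n, pE p' n * (ENNReal.ofReal t) ^ n := by
      rw [← hX, ← thinE_gen, ← thinE_gen]
      exact tsum_congr fun k => by rw [hthE k]
    rw [gen_toReal hp.1 ht0, gen_toReal hp'.1 ht0, e1]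
  -- analytic continuation
  have hfp := hasFPS hp
  have hfp' := hasFPS hp'
  have hball : Metric.eball (0:ℝ) 1 = Metric.ball (0:ℝ) 1 := by
    rw [← Metric.emetric_ball (x := (0:ℝ)) (ε := (1:ℝ)), ENNReal.ofReal_one]
  have hpre : IsPreconnected (Metric.eball (0:ℝ) 1) := by
    rw [hball]
    exact (convex_ball (0:ℝ) 1).isPreconnected
  have hz₀U : (1 - α / 2 : ℝ) ∈ Metric.eball (0:ℝ) 1 := by
    rw [hball, Metric.mem_ball, Real.dist_eq, sub_zero]
    rw [abs_lt]
    constructor <;> linarith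
  have hev : gen p =ᶠ[nhds (1 - α / 2 : ℝ)] gen p' :=
    Filter.eventuallyEq_of_mem (Ioo_mem_nhds (by linarith) (by linarith)) key
  have heq : Set.EqOn (gen p) (gen p') (Metric.eball (0:ℝ) 1) :=
    (hfp.analyticOnNhd).eqOn_of_preconnected_of_eventuallyEq
      (hfp'.analyticOnNhd) hpre hz₀U hev
  have hfms : fms p = fms p' :=
    ((hfp.congr heq).hasFPowerSeriesAt).eq_formalMultilinearSeries hfp'.hasFPowerSeriesAt
  funext n
  have h2 := congrFun hfms n
  have h3 := congrArg
    (fun c : ContinuousMultilinearMap ℝ (fun _ : Fin n => ℝ) ℝ => c fun _ => 1) h2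
  simpa [fms, ContinuousMultilinearMap.mkPiRing_apply] using h3

end Stmt8

open Stmt8 Pointwise in
/-- `ρ(α∘X) = α·ρ(X)`. -/
theorem stmt_8 (α : ℝ) (hα : α ∈ Set.Icc (0:ℝ) 1) (p : ℕ → ℝ) (hp : IsPMF p) :
    rho (thin α p) = α * rho p := by
  obtain ⟨hα0, hα1⟩ := hα
  have hone : ∀ r : ℕ → ℝ, IsPMF r →
      (1:ℝ) ∈ {β : ℝ | β ∈ Set.Icc (0:ℝ) 1 ∧ MemM β r} := by
    intro r hr
    exact ⟨⟨zero_le_one, le_refl 1⟩, r, hr, fun k => (congrFun (thin_one r) k).symm⟩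
  have hbdd : ∀ r : ℕ → ℝ, BddBelow {β : ℝ | β ∈ Set.Icc (0:ℝ) 1 ∧ MemM β r} :=
    fun r => ⟨0, fun x hx => hx.1.1⟩
  rcases eq_or_lt_of_le hα0 with h0 | h0
  · -- α = 0
    have hmem : (0:ℝ) ∈ {β : ℝ | β ∈ Set.Icc (0:ℝ) 1 ∧ MemM β (thin α p)} := by
      refine ⟨⟨le_refl 0, zero_le_one⟩, p, hp, fun k => ?_⟩
      rw [← h0]
    have hrz : rho (thin α p) = 0 := by
      rw [rho]
      exact le_antisymm (csInf_le (hbdd _) hmem)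
        (le_csInf ⟨0, hmem⟩ fun b hb => hb.1.1)
    rw [hrz, ← h0, zero_mul]
  · -- 0 < α
    have hαm : α ∈ Set.Icc (0:ℝ) 1 := ⟨hα0, hα1⟩
    have hpmf' := isPMF_thin hαm hp
    have hrho_le_one : rho p ≤ 1 := csInf_le (hbdd p) (hone p hp)
    have hrho_nonneg : 0 ≤ rho p := le_csInf ⟨1, hone p hp⟩ fun b hb => hb.1.1
    apply le_antisymm
    · -- rho (thin α p) ≤ α * rho p
      have hsub : α • {β : ℝ | β ∈ Set.Icc (0:ℝ) 1 ∧ MemM β p}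
          ⊆ {γ : ℝ | γ ∈ Set.Icc (0:ℝ) 1 ∧ MemM γ (thin α p)} := by
        rintro x ⟨β, hβ, rfl⟩
        obtain ⟨⟨hβ0, hβ1⟩, q, hq, hqe⟩ := hβ
        have hpe : p = thin β q := funext hqe
        refine ⟨⟨mul_nonneg h0.le hβ0, mul_le_one₀ hα1 hβ0 hβ1⟩, q, hq, fun k => ?_⟩
        show thin α p k = thin (α * β) q k
        rw [hpe, thin_comp hαm ⟨hβ0, hβ1⟩ hq]
      calc rho (thin α p)
          ≤ sInf (α • {β : ℝ | β ∈ Set.Icc (0:ℝ) 1 ∧ MemM β p}) := by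
            rw [rho]
            exact csInf_le_csInf (hbdd _)
              ⟨α • 1, Set.smul_mem_smul_set (hone p hp)⟩ hsub
        _ = α * rho p := by
            rw [Real.sInf_smul_of_nonneg h0.le, rho, smul_eq_mul]
    · -- α * rho p ≤ rho (thin α p)
      rw [rho]
      refine le_csInf ⟨1, hone _ hpmf'⟩ ?_
      rintro γ ⟨⟨hγ0, hγ1⟩, q, hq, hγe⟩
      rcases le_or_gt α γ with hle | hlt
      · calc α * rho p ≤ α * 1 := mul_le_mul_of_nonneg_left hrho_le_one h0.le
          _ = α := mul_one α
          _ ≤ γ := hle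
      · set δ : ℝ := γ / α with hδ
        have hδ0 : 0 ≤ δ := div_nonneg hγ0 h0.le
        have hδ1 : δ ≤ 1 := (div_le_one h0).2 hlt.le
        have hδq : IsPMF (thin δ q) := isPMF_thin ⟨hδ0, hδ1⟩ hq
        have hαδ : α * δ = γ := by
          rw [hδ]; field_simp
        have hcomp : thin α (thin δ q) = thin γ q := by
          rw [thin_comp hαm ⟨hδ0, hδ1⟩ hq, hαδ]
        have hpe : p = thin δ q := by
          refine thin_inj h0 hα1 hp hδq fun k => ?_
          rw [hcomp]
          exact hγe k
        have hδS : δ ∈ {β : ℝ | β ∈ Set.Icc (0:ℝ) 1 ∧ MemM β p} :=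
          ⟨⟨hδ0, hδ1⟩, q, hq, fun k => congrFun hpe k⟩
        have hrle : rho p ≤ δ := csInf_le (hbdd p) hδS
        calc α * rho p ≤ α * δ := mul_le_mul_of_nonneg_left hrle h0.le
          _ = γ := hαδ
end

section
/- If X is a nonnegative integer-valued random variable whose support contains a hole (there exists n ≥ 1 with P(X=n) > 0 = P(X=n−1)), then X ∉ M_α for any α ∈ (0,1); i.e., ρ(X) = 1. -/
open scoped BigOperators

lemma binom_nonneg {α : ℝ} (h0 : 0 ≤ α) (h1 : α ≤ 1) (m k : ℕ) :
    0 ≤ (m.choose k : ℝ) * α ^ k * (1 - α) ^ (m - k) := by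
  have h1' : (0:ℝ) ≤ 1 - α := by linarith
  exact mul_nonneg (mul_nonneg (Nat.cast_nonneg _) (pow_nonneg h0 _)) (pow_nonneg h1' _)

lemma binom_le_one {α : ℝ} (h0 : 0 ≤ α) (h1 : α ≤ 1) (m k : ℕ) :
    (m.choose k : ℝ) * α ^ k * (1 - α) ^ (m - k) ≤ 1 := by
  rcases le_or_gt k m with hk | hk
  · have h1' : (0:ℝ) ≤ 1 - α := by linarith
    have hsum : ∑ j ∈ Finset.range (m+1), α ^ j * (1-α) ^ (m-j) * (m.choose j : ℝ) = 1 := by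
      have := (add_pow α (1-α) m).symm
      simpa using this
    have hle : α ^ k * (1-α) ^ (m-k) * (m.choose k : ℝ) ≤
        ∑ j ∈ Finset.range (m+1), α ^ j * (1-α) ^ (m-j) * (m.choose j : ℝ) := by
      apply Finset.single_le_sum (f := fun j => α ^ j * (1-α) ^ (m-j) * (m.choose j : ℝ))
      · intro j _
        exact mul_nonneg (mul_nonneg (pow_nonneg h0 _) (pow_nonneg h1' _)) (Nat.cast_nonneg _)
      · exact Finset.mem_range.mpr (Nat.lt_succ_of_le hk)
    calc (m.choose k : ℝ) * α ^ k * (1 - α) ^ (m - k)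
        = α ^ k * (1-α) ^ (m-k) * (m.choose k : ℝ) := by ring
      _ ≤ ∑ j ∈ Finset.range (m+1), α ^ j * (1-α) ^ (m-j) * (m.choose j : ℝ) := hle
      _ = 1 := hsum
  · simp [Nat.choose_eq_zero_of_lt hk]

lemma thin_term_summable {α : ℝ} (h0 : 0 ≤ α) (h1 : α ≤ 1) {q : ℕ → ℝ}
    (hq : IsPMF q) (k : ℕ) :
    Summable (fun n => (n.choose k : ℝ) * α ^ k * (1 - α) ^ (n - k) * q n) := by
  apply Summable.of_nonneg_of_le
    (fun n => mul_nonneg (binom_nonneg h0 h1 n k) (hq.1 n))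
    (fun n => ?_) hq.2.summable
  calc (n.choose k : ℝ) * α ^ k * (1 - α) ^ (n - k) * q n
      ≤ 1 * q n := mul_le_mul_of_nonneg_right (binom_le_one h0 h1 n k) (hq.1 n)
    _ = q n := one_mul _

lemma not_memM_of_hole (p : ℕ → ℝ) (n : ℕ) (hn : 1 ≤ n)
    (hpos : 0 < p n) (hhole : p (n - 1) = 0) {α : ℝ} (hα : α ∈ Set.Ioo (0:ℝ) 1) :
    ¬ MemM α p := by
  rintro ⟨q, hq, heq⟩
  have h0 : (0:ℝ) ≤ α := hα.1.le
  have h1 : α ≤ 1 := hα.2.le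
  have hthin : 0 < thin α q n := by rw [← heq n]; exact hpos
  -- extract m with positive term
  have hex : ∃ m, (m.choose n : ℝ) * α ^ n * (1 - α) ^ (m - n) * q m ≠ 0 := by
    by_contra hc
    push_neg at hc
    have : thin α q n = 0 := by
      unfold thin
      rw [tsum_congr hc]
      exact tsum_zero
    rw [this] at hthin
    exact lt_irrefl _ hthin
  obtain ⟨m, hm⟩ := hex
  have hqm : 0 < q m := by
    rcases (hq.1 m).lt_or_eq with h | h
    · exact h
    · exact absurd (by rw [← h, mul_zero]) hm
  have hnm : n ≤ m := by
    by_contra hlt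
    push_neg at hlt
    exact hm (by simp [Nat.choose_eq_zero_of_lt hlt])
  have hle : n - 1 ≤ m := le_trans (Nat.sub_le n 1) hnm
  have hterm : 0 < (m.choose (n-1) : ℝ) * α ^ (n-1) * (1 - α) ^ (m - (n-1)) * q m := by
    apply mul_pos _ hqm
    apply mul_pos (mul_pos _ (pow_pos hα.1 _)) (pow_pos (by linarith [hα.2]) _)
    exact_mod_cast Nat.choose_pos hle
  have hge : (m.choose (n-1) : ℝ) * α ^ (n-1) * (1 - α) ^ (m - (n-1)) * q m ≤
      thin α q (n-1) := by
    apply Summable.le_tsum (thin_term_summable h0 h1 hq (n-1)) m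
    intro b _
    exact mul_nonneg (binom_nonneg h0 h1 b (n-1)) (hq.1 b)
  have : 0 < p (n-1) := by rw [heq (n-1)]; exact lt_of_lt_of_le hterm hge
  rw [hhole] at this
  exact lt_irrefl _ this

lemma memM_one (p : ℕ → ℝ) (hp : IsPMF p) : MemM 1 p := by
  refine ⟨p, hp, fun k => ?_⟩
  unfold thin
  rw [tsum_eq_single k]
  · simp
  · intro n hnk
    rcases lt_or_gt_of_ne hnk with h | h
    · simp [Nat.choose_eq_zero_of_lt h]
    · have hne : n - k ≠ 0 := Nat.sub_ne_zero_of_lt h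
      simp [zero_pow hne]

/-- if the support of `X` contains a hole then `X ∉ M_α` for all
`α ∈ (0,1)`, i.e. `ρ(X) = 1`. -/
theorem stmt_13 (p : ℕ → ℝ) (hp : IsPMF p) (n : ℕ) (hn : 1 ≤ n)
    (hpos : 0 < p n) (hhole : p (n - 1) = 0) :
    (∀ α ∈ Set.Ioo (0:ℝ) 1, ¬ MemM α p) ∧ rho p = 1 := by
  have hmain : ∀ α ∈ Set.Ioo (0:ℝ) 1, ¬ MemM α p :=
    fun α hα => not_memM_of_hole p n hn hpos hhole hα
  refine ⟨hmain, ?_⟩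
  have hset : {α : ℝ | α ∈ Set.Icc (0:ℝ) 1 ∧ MemM α p} = {1} := by
    ext α
    simp only [Set.mem_setOf_eq, Set.mem_singleton_iff]
    constructor
    · rintro ⟨⟨h0, h1⟩, hmem⟩
      rcases h0.lt_or_eq with h0' | h0'
      · rcases h1.lt_or_eq with h1' | h1'
        · exact absurd hmem (hmain α ⟨h0', h1'⟩)
        · exact h1'
      · exfalso
        obtain ⟨q, hq, heq⟩ := hmem
        have : p n = 0 := by
          rw [heq n]
          unfold thin
          have : ∀ m : ℕ, (m.choose n : ℝ) * (0:ℝ) ^ n * (1 - 0) ^ (m - n) * q m = 0 := by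
            intro m
            have : n ≠ 0 := by omega
            simp [zero_pow this]
          rw [← h0']
          rw [tsum_congr this]
          exact tsum_zero
        rw [this] at hpos
        exact lt_irrefl _ hpos
    · rintro rfl
      exact ⟨⟨zero_le_one, le_refl 1⟩, memM_one p hp⟩
  rw [rho, hset]
  exact csInf_singleton 1
end

section
/- Let X be a nonnegative integer-valued random variable with P(X=0) < 1 and E[X] < ∞. Then the conditional distribution of α∘X given α∘X ≥ 1 converges in distribution to the constant 1 as α → 0. -/
open scoped BigOperators
open Filter


lemma binom_term_le_one {x : ℝ} (hx0 : 0 ≤ x) (hx1 : x ≤ 1) {m j : ℕ} (hj : j ≤ m) :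
    (m.choose j : ℝ) * x ^ j * (1 - x) ^ (m - j) ≤ 1 := by
  have h := add_pow x (1 - x) m
  have hx : x + (1 - x) = 1 := by ring
  rw [hx, one_pow] at h
  have hle : x ^ j * (1 - x) ^ (m - j) * (m.choose j : ℝ) ≤
      ∑ i ∈ Finset.range (m + 1), x ^ i * (1 - x) ^ (m - i) * (m.choose i : ℝ) := by
    apply Finset.single_le_sum (f := fun i => x ^ i * (1 - x) ^ (m - i) * (m.choose i : ℝ))
    · intro i _
      have : (0:ℝ) ≤ 1 - x := by linarith
      positivity
    · simpa using Nat.lt_succ_of_le hj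
  calc (m.choose j : ℝ) * x ^ j * (1 - x) ^ (m - j)
      = x ^ j * (1 - x) ^ (m - j) * (m.choose j : ℝ) := by ring
    _ ≤ _ := hle
    _ = 1 := h.symm

lemma choose_term_le {k : ℕ} (hk : 1 ≤ k) (n : ℕ) {α : ℝ} (h0 : 0 ≤ α) (h1 : α ≤ 1) :
    (n.choose k : ℝ) * α ^ (k - 1) * (1 - α) ^ (n - k) ≤ n := by
  rcases lt_or_ge n k with h | h
  · rw [Nat.choose_eq_zero_of_lt h]
    simp
  · obtain ⟨k', rfl⟩ : ∃ k', k = k' + 1 := ⟨k - 1, by omega⟩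
    obtain ⟨n', rfl⟩ : ∃ n', n = n' + 1 := ⟨n - 1, by omega⟩
    have hkey : ((n' + 1).choose (k' + 1) : ℝ) * (k' + 1) = (n' + 1) * (n'.choose k' : ℝ) := by
      exact_mod_cast congrArg (Nat.cast (R := ℝ)) (Nat.add_one_mul_choose_eq n' k').symm
    have hle : ((n' + 1).choose (k' + 1) : ℝ) ≤ (n' + 1) * (n'.choose k' : ℝ) := by
      nlinarith [(Nat.cast_nonneg ((n' + 1).choose (k' + 1)) : (0:ℝ) ≤ _), (Nat.cast_nonneg k' : (0:ℝ) ≤ _)]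
    have h1x : (0:ℝ) ≤ 1 - α := by linarith
    have hb : (n'.choose k' : ℝ) * α ^ k' * (1 - α) ^ (n' - k') ≤ 1 :=
      binom_term_le_one h0 h1 (by omega)
    have hpow : (0:ℝ) ≤ α ^ k' * (1 - α) ^ (n' - k') := by positivity
    calc ((n' + 1).choose (k' + 1) : ℝ) * α ^ (k' + 1 - 1) * (1 - α) ^ (n' + 1 - (k' + 1))
        = ((n' + 1).choose (k' + 1) : ℝ) * (α ^ k' * (1 - α) ^ (n' - k')) := by
          simp [mul_assoc]
      _ ≤ ((n' + 1) * (n'.choose k' : ℝ)) * (α ^ k' * (1 - α) ^ (n' - k')) :=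
          mul_le_mul_of_nonneg_right hle hpow
      _ = (n' + 1) * ((n'.choose k' : ℝ) * α ^ k' * (1 - α) ^ (n' - k')) := by ring
      _ ≤ (n' + 1) * 1 := by
          apply mul_le_mul_of_nonneg_left hb (by positivity)
      _ = ((n' + 1 : ℕ) : ℝ) := by push_cast; ring


/-- if `P(X=0) < 1` and `E X < ∞` then the law of `α∘X` conditioned
on `{α∘X ≥ 1}` converges to the constant `1` as `α → 0`. -/
theorem stmt_14 (p : ℕ → ℝ) (hp : IsPMF p) (h0 : p 0 < 1)
    (hm : Summable fun k : ℕ => (k : ℝ) * p k) :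
    ∀ k : ℕ, Filter.Tendsto
      (fun α : ℝ => if k = 0 then 0 else thin α p k / (1 - thin α p 0))
      (nhdsWithin 0 (Set.Ioo (0:ℝ) 1))
      (nhds (if k = 1 then (1:ℝ) else 0)) := by
  obtain ⟨hnn, hsum⟩ := hp
  set F := nhdsWithin (0:ℝ) (Set.Ioo (0:ℝ) 1) with hF
  -- there is a positive mass point away from 0
  obtain ⟨n0, hn0, hpn0⟩ : ∃ n, n ≠ 0 ∧ 0 < p n := by
    by_contra h
    push_neg at h
    have hz : ∀ n, n ≠ 0 → p n = 0 := fun n hn => le_antisymm (h n hn) (hnn n)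
    have : (1:ℝ) = p 0 := by
      rw [← hsum.tsum_eq, tsum_eq_single 0 (fun b hb => hz b hb)]
    linarith
  set m := ∑' n : ℕ, (n : ℝ) * p n with hmdef
  have hterm_nn : ∀ i : ℕ, 0 ≤ (i : ℝ) * p i := fun i => mul_nonneg (Nat.cast_nonneg i) (hnn i)
  have hm_pos : 0 < m := by
    have h1 : (0:ℝ) < (n0 : ℝ) * p n0 := by
      have : (0:ℝ) < (n0 : ℝ) := by exact_mod_cast Nat.pos_of_ne_zero hn0
      positivity
    exact lt_of_lt_of_le h1 (Summable.le_tsum hm n0 fun i _ => hterm_nn i)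
  -- limit of B α := (1 - thin α p 0)/α
  have hB : Filter.Tendsto (fun α : ℝ => ∑' n : ℕ, (∑ i ∈ Finset.range n, (1 - α) ^ i) * p n)
      F (nhds m) := by
    have hg : ∀ n : ℕ, (n : ℝ) * p n = (∑ i ∈ Finset.range n, (1 - (0:ℝ)) ^ i) * p n := by
      intro n; simp
    rw [hmdef, tsum_congr hg]
    apply tendsto_tsum_of_dominated_convergence hm
    · intro n
      have hc : Continuous fun α : ℝ => (∑ i ∈ Finset.range n, (1 - α) ^ i) * p n := by
        exact (continuous_finset_sum _ fun i _ => (continuous_const.sub continuous_id).pow i).mul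
          continuous_const
      simpa using (hc.tendsto 0).mono_left nhdsWithin_le_nhds
    · filter_upwards [self_mem_nhdsWithin] with α hα n
      have h1x : (0:ℝ) ≤ 1 - α := by linarith [hα.2]
      have h2x : (1:ℝ) - α ≤ 1 := by linarith [hα.1]
      have hsle : ∑ i ∈ Finset.range n, (1 - α) ^ i ≤ (n : ℝ) := by
        calc ∑ i ∈ Finset.range n, (1 - α) ^ i ≤ ∑ i ∈ Finset.range n, (1:ℝ) :=
              Finset.sum_le_sum fun i _ => pow_le_one₀ h1x h2x
          _ = n := by simp
      have hsnn : (0:ℝ) ≤ ∑ i ∈ Finset.range n, (1 - α) ^ i :=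
        Finset.sum_nonneg fun i _ => pow_nonneg h1x i
      rw [Real.norm_eq_abs, abs_mul, abs_of_nonneg hsnn, abs_of_nonneg (hnn n)]
      exact mul_le_mul_of_nonneg_right hsle (hnn n)
  intro k
  rcases Nat.eq_zero_or_pos k with rfl | hk
  · simpa using (tendsto_const_nhds : Filter.Tendsto (fun _ : ℝ => (0:ℝ)) F _)
  have hkne : k ≠ 0 := Nat.pos_iff_ne_zero.mp hk
  simp only [if_neg hkne]
  -- limit of A α := thin α p k / α
  set g : ℕ → ℝ := fun n => (n.choose k : ℝ) * (0:ℝ) ^ (k - 1) * p n with hgdef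
  have hA : Filter.Tendsto
      (fun α : ℝ => ∑' n : ℕ, (n.choose k : ℝ) * α ^ (k - 1) * (1 - α) ^ (n - k) * p n)
      F (nhds (∑' n, g n)) := by
    apply tendsto_tsum_of_dominated_convergence hm
    · intro n
      have hc : Continuous fun α : ℝ =>
          (n.choose k : ℝ) * α ^ (k - 1) * (1 - α) ^ (n - k) * p n := by
        exact (((continuous_const.mul (continuous_pow _)).mul
          ((continuous_const.sub continuous_id).pow _)).mul continuous_const)
      have hv : (n.choose k : ℝ) * (0:ℝ) ^ (k - 1) * (1 - (0:ℝ)) ^ (n - k) * p n = g n := by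
        simp [hgdef]
      rw [hF, ← hv]
      exact (hc.tendsto 0).mono_left nhdsWithin_le_nhds
    · filter_upwards [self_mem_nhdsWithin] with α hα n
      have h1x : (0:ℝ) ≤ 1 - α := by linarith [hα.2]
      have hle := choose_term_le hk n hα.1.le hα.2.le
      have hnn' : (0:ℝ) ≤ (n.choose k : ℝ) * α ^ (k - 1) * (1 - α) ^ (n - k) := by
        have := hα.1.le
        positivity
      rw [Real.norm_eq_abs, abs_mul, abs_of_nonneg hnn', abs_of_nonneg (hnn n)]
      exact mul_le_mul_of_nonneg_right hle (hnn n)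
  -- eventual equality
  have heq : ∀ α ∈ Set.Ioo (0:ℝ) 1,
      thin α p k / (1 - thin α p 0) =
        (∑' n : ℕ, (n.choose k : ℝ) * α ^ (k - 1) * (1 - α) ^ (n - k) * p n) /
        (∑' n : ℕ, (∑ i ∈ Finset.range n, (1 - α) ^ i) * p n) := by
    intro α hα
    have hαne : α ≠ 0 := ne_of_gt hα.1
    have h1 : thin α p k / α
        = ∑' n : ℕ, (n.choose k : ℝ) * α ^ (k - 1) * (1 - α) ^ (n - k) * p n := by
      rw [thin, ← tsum_div_const]
      apply tsum_congr; intro n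
      have hpow : α ^ k = α ^ (k - 1) * α := by
        rw [← pow_succ]; congr 1; omega
      rw [hpow]
      field_simp
    have h2 : (1 - thin α p 0) / α
        = ∑' n : ℕ, (∑ i ∈ Finset.range n, (1 - α) ^ i) * p n := by
      have hs2 : Summable fun n : ℕ => (1 - α) ^ n * p n := by
        apply Summable.of_nonneg_of_le (fun n => ?_) (fun n => ?_) hsum.summable
        · have h1x : (0:ℝ) ≤ 1 - α := by linarith [hα.2]
          exact mul_nonneg (pow_nonneg h1x n) (hnn n)
        · have h1x : (0:ℝ) ≤ 1 - α := by linarith [hα.2]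
          have h2x : (1:ℝ) - α ≤ 1 := by linarith [hα.1]
          calc (1 - α) ^ n * p n ≤ 1 * p n :=
              mul_le_mul_of_nonneg_right (pow_le_one₀ h1x h2x) (hnn n)
            _ = p n := one_mul _
      have hthin0 : thin α p 0 = ∑' n : ℕ, (1 - α) ^ n * p n := by
        rw [thin]; apply tsum_congr; intro n; simp
      have hhs : HasSum (fun n : ℕ => p n - (1 - α) ^ n * p n) (1 - thin α p 0) := by
        rw [hthin0]; exact hsum.sub hs2.hasSum
      rw [← hhs.tsum_eq, ← tsum_div_const]
      apply tsum_congr; intro n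
      have hgeom : (1:ℝ) - (1 - α) ^ n = (∑ i ∈ Finset.range n, (1 - α) ^ i) * α := by
        have := geom_sum_mul (1 - α) n
        linear_combination this
      have : p n - (1 - α) ^ n * p n = (∑ i ∈ Finset.range n, (1 - α) ^ i) * α * p n := by
        rw [← hgeom]; ring
      rw [this]
      field_simp
    rw [← h1, ← h2]
    rcases eq_or_ne (1 - thin α p 0) 0 with hb | hb
    · simp [hb]
    · field_simp
  have hdiv := hA.div hB (ne_of_gt hm_pos)
  have hcongr : Filter.Tendsto (fun α : ℝ => thin α p k / (1 - thin α p 0)) F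
      (nhds ((∑' n, g n) / m)) := by
    apply hdiv.congr'
    filter_upwards [self_mem_nhdsWithin] with α hα
    exact (heq α hα).symm
  have hval : (∑' n, g n) / m = if k = 1 then (1:ℝ) else 0 := by
    rcases eq_or_ne k 1 with rfl | hk1
    · rw [if_pos rfl]
      have : ∀ n : ℕ, g n = (n : ℝ) * p n := by
        intro n; simp [hgdef]
      rw [tsum_congr this, ← hmdef, div_self (ne_of_gt hm_pos)]
    · rw [if_neg hk1]
      have : ∀ n : ℕ, g n = 0 := by
        intro n
        have : (0:ℝ) ^ (k - 1) = 0 := by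
          apply zero_pow; omega
        simp [hgdef, this]
      rw [tsum_congr this, tsum_zero, zero_div]
  rwa [hval] at hcongr
end

section
/- Fix c, d with 0 < d < c < 1 and set A = (1−c²)^{-1} + d(1−d²)^{-1}. Define p_k = c^k/A for even k and p_k = d^k/A for odd k. Then p is a probability mass function on ℤ₊ whose support is all of ℤ₊ (no holes), yet the p.g.f. P_X(s) = Σ p_k s^k is not absolutely monotone on (−ε,0) for any ε ∈ (0,1); equivalently ρ(X) = 1, so X is not an α-thinned distribution for any α < 1. -/
open scoped BigOperators

/-! ### Auxiliary lemmas -/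

lemma aux_dF_mono {m n : ℕ} (k : ℕ) (h : m ≤ n) :
    m.descFactorial k ≤ n.descFactorial k := by
  induction k with
  | zero => simp
  | succ k ih =>
      rw [Nat.descFactorial_succ, Nat.descFactorial_succ]
      exact Nat.mul_le_mul (Nat.sub_le_sub_right h k) ih

lemma aux_dF_pos {m n : ℕ} (h : n ≤ m) : 0 < m.descFactorial n :=
  Nat.pos_of_ne_zero (fun hz => absurd (Nat.descFactorial_eq_zero_iff_lt.1 hz) (not_lt.2 h))

/-- key combinatorial identity -/
lemma aux_NI (m n k : ℕ) :
    (k + n).descFactorial n * m.choose (k + n) = m.descFactorial n * (m - n).choose k := by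
  rcases le_or_gt (k + n) m with h | h
  · have hn : n ≤ m := le_trans (Nat.le_add_left n k) h
    have hk : k ≤ m - n := by omega
    apply Nat.eq_of_mul_eq_mul_right
      (Nat.mul_pos (Nat.factorial_pos k) (Nat.factorial_pos (m - n - k)))
    have e1 : k.factorial * (k + n).descFactorial n = (k + n).factorial := by
      have := Nat.factorial_mul_descFactorial (Nat.le_add_left n k)
      simpa using this
    have e2 : m.choose (k + n) * (k + n).factorial * (m - (k + n)).factorial = m.factorial :=
      Nat.choose_mul_factorial_mul_factorial h
    have e3 : (m - n).choose k * k.factorial * (m - n - k).factorial = (m - n).factorial :=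
      Nat.choose_mul_factorial_mul_factorial hk
    have e4 : (m - n).factorial * m.descFactorial n = m.factorial := Nat.factorial_mul_descFactorial hn
    have hmm : m - (k + n) = m - n - k := by omega
    calc (k + n).descFactorial n * m.choose (k + n) * (k.factorial * (m - n - k).factorial)
        = m.choose (k + n) * (k.factorial * (k + n).descFactorial n) * (m - (k + n)).factorial := by
          rw [hmm]; ring
      _ = m.factorial := by rw [e1, ← e2]
      _ = (m - n).factorial * m.descFactorial n := e4.symm
      _ = m.descFactorial n * ((m - n).choose k * k.factorial * (m - n - k).factorial) := by rw [e3]; ring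
      _ = m.descFactorial n * (m - n).choose k * (k.factorial * (m - n - k).factorial) := by ring
  · rw [Nat.choose_eq_zero_of_lt h, Nat.mul_zero]
    rcases le_or_gt n m with h2 | h2
    · rw [Nat.choose_eq_zero_of_lt (by omega), Nat.mul_zero]
    · rw [Nat.descFactorial_eq_zero_iff_lt.2 h2, Nat.zero_mul]

lemma aux_LS (n : ℕ) {z : ℝ} (hz0 : 0 ≤ z) (hz1 : z < 1) :
    Summable fun k : ℕ => ((k + n).descFactorial n : ℝ) * z ^ k := by
  have h1 : Summable fun k : ℕ => ((2:ℝ) ^ n * (n:ℝ) ^ n) * z ^ k :=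
    (summable_geometric_of_lt_one hz0 hz1).mul_left _
  have h2 : Summable fun k : ℕ => (2:ℝ) ^ n * ((k:ℝ) ^ n * z ^ k) :=
    (summable_pow_mul_geometric_of_norm_lt_one (R := ℝ) n
      (by rwa [Real.norm_eq_abs, abs_of_nonneg hz0])).mul_left _
  apply Summable.of_nonneg_of_le (fun k => by positivity) (fun k => ?_) (h1.add h2)
  have hnat : (k + n).descFactorial n ≤ 2 ^ n * n ^ n + 2 ^ n * k ^ n := by
    calc (k + n).descFactorial n ≤ (k + n) ^ n := Nat.descFactorial_le_pow _ _
      _ ≤ (2 * max k n) ^ n := Nat.pow_le_pow_left (by omega) n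
      _ = 2 ^ n * (max k n) ^ n := by rw [mul_pow]
      _ ≤ 2 ^ n * (n ^ n + k ^ n) := by
          apply Nat.mul_le_mul_left
          rcases max_cases k n with ⟨hm, _⟩ | ⟨hm, _⟩ <;> rw [hm] <;> omega
      _ = 2 ^ n * n ^ n + 2 ^ n * k ^ n := by ring
  have hz : (0:ℝ) ≤ z ^ k := by positivity
  calc ((k + n).descFactorial n : ℝ) * z ^ k
      ≤ ((2:ℝ) ^ n * (n:ℝ) ^ n + (2:ℝ) ^ n * (k:ℝ) ^ n) * z ^ k := by
        apply mul_le_mul_of_nonneg_right _ hz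
        exact_mod_cast Nat.cast_le.2 hnat
    _ = (2:ℝ) ^ n * (n:ℝ) ^ n * z ^ k + (2:ℝ) ^ n * ((k:ℝ) ^ n * z ^ k) := by ring

lemma aux_L2a (b : ℕ → ℝ) (r s : ℝ) (hs : |s| < r)
    (h0 : Summable fun k => |b k| * r ^ k)
    (h1 : Summable fun k : ℕ => ((k:ℝ) + 1) * |b (k + 1)| * r ^ k) :
    HasDerivAt (fun t : ℝ => ∑' k, b k * t ^ k)
      (∑' k : ℕ, ((k:ℝ) + 1) * b (k + 1) * s ^ k) s := by
  have hr : 0 < r := (abs_nonneg s).trans_lt hs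
  set u : ℕ → ℝ := fun k => (k : ℝ) * |b k| * r ^ (k - 1) with hu
  have hus : Summable u := by
    rw [← summable_nat_add_iff 1]
    apply Summable.congr h1
    intro k
    simp only [hu]
    push_cast
    ring
  have hmem : s ∈ Metric.ball (0:ℝ) r := by
    simpa [Real.dist_eq] using hs
  have hbd : ∀ (k : ℕ) (t : ℝ), t ∈ Metric.ball (0:ℝ) r →
      ‖b k * ((k:ℝ) * t ^ (k - 1))‖ ≤ u k := by
    intro k t ht
    have ht' : |t| ≤ r := by
      rw [Metric.mem_ball, Real.dist_eq, sub_zero] at ht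
      exact ht.le
    have : ‖b k * ((k:ℝ) * t ^ (k - 1))‖ = |b k| * ((k:ℝ) * |t| ^ (k - 1)) := by
      rw [Real.norm_eq_abs, abs_mul, abs_mul, abs_pow, Nat.abs_cast]
    rw [this, hu]
    have h1' : |t| ^ (k - 1) ≤ r ^ (k - 1) := pow_le_pow_left₀ (abs_nonneg t) ht' _
    calc |b k| * ((k:ℝ) * |t| ^ (k - 1)) ≤ |b k| * ((k:ℝ) * r ^ (k - 1)) := by
          apply mul_le_mul_of_nonneg_left _ (abs_nonneg _)
          exact mul_le_mul_of_nonneg_left h1' (Nat.cast_nonneg k)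
      _ = (k:ℝ) * |b k| * r ^ (k - 1) := by ring
  have hsumt : ∀ t : ℝ, t ∈ Metric.ball (0:ℝ) r → Summable fun k => b k * t ^ k := by
    intro t ht
    have ht' : |t| ≤ r := by
      rw [Metric.mem_ball, Real.dist_eq, sub_zero] at ht; exact ht.le
    apply Summable.of_abs
    apply Summable.of_nonneg_of_le (fun k => abs_nonneg _) (fun k => ?_) h0
    rw [abs_mul, abs_pow]
    exact mul_le_mul_of_nonneg_left (pow_le_pow_left₀ (abs_nonneg t) ht' _) (abs_nonneg _)
  have key := hasDerivAt_of_tendstoUniformlyOn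
    (f := fun (N : Finset ℕ) (t : ℝ) => ∑ k ∈ N, b k * t ^ k)
    (f' := fun (N : Finset ℕ) (t : ℝ) => ∑ k ∈ N, b k * ((k:ℝ) * t ^ (k - 1)))
    (g := fun t : ℝ => ∑' k, b k * t ^ k)
    (g' := fun t : ℝ => ∑' k, b k * ((k:ℝ) * t ^ (k - 1)))
    Metric.isOpen_ball
    (tendstoUniformlyOn_tsum hus hbd)
    (Filter.Eventually.of_forall fun N t _ =>
      HasDerivAt.fun_sum fun k _ => (hasDerivAt_pow k t).const_mul (b k))
    (fun t ht => (hsumt t ht).hasSum)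
    hmem
  have key' : HasDerivAt (fun t : ℝ => ∑' k, b k * t ^ k)
      (∑' k : ℕ, b k * ((k:ℝ) * s ^ (k - 1))) s := key
  have hrw : (∑' k, b k * ((k:ℝ) * s ^ (k - 1))) = ∑' k : ℕ, ((k:ℝ) + 1) * b (k + 1) * s ^ k := by
    have hsum2 : Summable fun k => b k * ((k:ℝ) * s ^ (k - 1)) := by
      apply Summable.of_abs
      apply Summable.of_nonneg_of_le (fun k => abs_nonneg _) (fun k => ?_) hus
      have := hbd k s hmem
      rwa [Real.norm_eq_abs] at this
    rw [Summable.tsum_eq_zero_add hsum2]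
    simp only [Nat.cast_zero, Nat.cast_add, Nat.cast_one]
    rw [zero_mul, mul_zero, zero_add]
    apply tsum_congr
    intro k
    simp only [Nat.add_sub_cancel]
    push_cast
    ring
  rwa [hrw] at key'

lemma aux_L2 (a : ℕ → ℝ) (C x : ℝ) (hx0 : 0 ≤ x) (hx1 : x < 1)
    (ha : ∀ k, |a k| ≤ C * x ^ k) :
    ∀ (n : ℕ) (s : ℝ), |s| < 1 →
      iteratedDeriv n (fun t : ℝ => ∑' k, a k * t ^ k) s
        = ∑' k, ((k + n).descFactorial n : ℝ) * a (k + n) * s ^ k := by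
  have hC0 : 0 ≤ C := by
    have := (abs_nonneg (a 0)).trans (ha 0); nlinarith [this]
  intro n
  induction n with
  | zero =>
      intro s _
      simp [iteratedDeriv_zero]
  | succ n ih =>
      intro s hs
      rw [iteratedDeriv_succ]
      have hball : Metric.ball (0:ℝ) 1 ∈ nhds s :=
        Metric.isOpen_ball.mem_nhds (by simpa [Real.dist_eq] using hs)
      have heq : iteratedDeriv n (fun t : ℝ => ∑' k, a k * t ^ k)
          =ᶠ[nhds s] fun t => ∑' k, ((k + n).descFactorial n : ℝ) * a (k + n) * t ^ k := by
        filter_upwards [hball] with t ht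
        exact ih t (by simpa [Real.dist_eq] using ht)
      rw [heq.deriv_eq]
      set b : ℕ → ℝ := fun k => ((k + n).descFactorial n : ℝ) * a (k + n) with hb
      set r : ℝ := (1 + |s|) / 2 with hrdef
      have hs0 : 0 ≤ |s| := abs_nonneg s
      have hsr : |s| < r := by rw [hrdef]; linarith
      have hr1 : r < 1 := by rw [hrdef]; linarith
      have hr0 : 0 ≤ r := hs0.trans hsr.le
      have hxr0 : 0 ≤ x * r := mul_nonneg hx0 hr0
      have hxr1 : x * r < 1 := by nlinarith
      have hbk : ∀ k, |b k| ≤ ((k + n).descFactorial n : ℝ) * (C * x ^ (k + n)) := by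
        intro k
        rw [hb]
        rw [abs_mul, Nat.abs_cast]
        exact mul_le_mul_of_nonneg_left (ha _) (Nat.cast_nonneg _)
      have h0 : Summable fun k => |b k| * r ^ k := by
        apply Summable.of_nonneg_of_le (fun k => by positivity) (fun k => ?_)
          ((aux_LS n hxr0 hxr1).mul_left (C * x ^ n))
        calc |b k| * r ^ k ≤ ((k + n).descFactorial n : ℝ) * (C * x ^ (k + n)) * r ^ k :=
              mul_le_mul_of_nonneg_right (hbk k) (by positivity)
          _ = C * x ^ n * (((k + n).descFactorial n : ℝ) * (x * r) ^ k) := by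
              rw [mul_pow, pow_add]; ring
      have h1 : Summable fun k : ℕ => ((k:ℝ) + 1) * |b (k + 1)| * r ^ k := by
        apply Summable.of_nonneg_of_le (fun k => by positivity) (fun k => ?_)
          ((aux_LS (n + 1) hxr0 hxr1).mul_left (C * x ^ (n + 1)))
        have hd : ((k:ℝ) + 1) * ((k + 1 + n).descFactorial n : ℝ)
            = ((k + (n + 1)).descFactorial (n + 1) : ℝ) := by
          have : (k + (n + 1)).descFactorial (n + 1) = (k + 1) * (k + 1 + n).descFactorial n := by
            have h' : k + (n + 1) = k + 1 + n := by omega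
            rw [h', Nat.descFactorial_succ]
            congr 1
            omega
          rw [this]
          push_cast
          ring
        calc ((k:ℝ) + 1) * |b (k + 1)| * r ^ k
            ≤ ((k:ℝ) + 1) * (((k + 1 + n).descFactorial n : ℝ) * (C * x ^ (k + 1 + n))) * r ^ k := by
              apply mul_le_mul_of_nonneg_right _ (by positivity)
              exact mul_le_mul_of_nonneg_left (hbk (k + 1)) (by positivity)
          _ = (((k:ℝ) + 1) * ((k + 1 + n).descFactorial n : ℝ)) * (C * x ^ (k + 1 + n)) * r ^ k := by
              ring
          _ = C * x ^ (n + 1) * (((k + (n + 1)).descFactorial (n + 1) : ℝ) * (x * r) ^ k) := by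
              rw [hd, mul_pow, show k + 1 + n = k + (n + 1) by omega, pow_add]
              ring
      have hD := aux_L2a b r s hsr h0 h1
      rw [hD.deriv]
      apply tsum_congr
      intro k
      have hb1 : b (k + 1) = ((k + 1 + n).descFactorial n : ℝ) * a (k + 1 + n) := rfl
      have hnat2 : (k + 1 + n).descFactorial (n + 1) = (k + 1) * (k + 1 + n).descFactorial n := by
        rw [Nat.descFactorial_succ]
        congr 1
        omega
      rw [hb1, show k + (n + 1) = k + 1 + n from by omega, hnat2]
      push_cast
      ring

/-- finite binomial identity for the thinning computation -/
lemma aux_finsum (α β w y : ℝ) (n m : ℕ) :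
    ∑ k ∈ Finset.range (m + 1), ((k + n).descFactorial n : ℝ) *
        ((m.choose (k + n) : ℝ) * α ^ (k + n) * β ^ (m - (k + n)) * w) * y ^ k
      = (m.descFactorial n : ℝ) * α ^ n * w * (α * y + β) ^ (m - n) := by
  rcases le_or_gt n m with hnm | hnm
  · rw [add_pow]
    rw [Finset.mul_sum]
    rw [← Finset.sum_subset (Finset.range_subset_range.2 (by omega : m - n + 1 ≤ m + 1))]
    · apply Finset.sum_congr rfl
      intro k hk
      have hk' : k ≤ m - n := by
        simpa [Nat.lt_succ_iff] using Finset.mem_range.1 hk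
      have hNI := aux_NI m n k
      have hcast : ((k + n).descFactorial n : ℝ) * (m.choose (k + n) : ℝ)
          = (m.descFactorial n : ℝ) * ((m - n).choose k : ℝ) := by
        exact_mod_cast congrArg (Nat.cast : ℕ → ℝ) hNI
      have hsub : m - (k + n) = m - n - k := by omega
      rw [hsub]
      rw [mul_pow, pow_add]
      calc ((k + n).descFactorial n : ℝ) *
            ((m.choose (k + n) : ℝ) * (α ^ k * α ^ n) * β ^ (m - n - k) * w) * y ^ k
          = (((k + n).descFactorial n : ℝ) * (m.choose (k + n) : ℝ)) *
            (α ^ k * α ^ n * β ^ (m - n - k) * w * y ^ k) := by ring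
        _ = ((m.descFactorial n : ℝ) * ((m - n).choose k : ℝ)) *
            (α ^ k * α ^ n * β ^ (m - n - k) * w * y ^ k) := by rw [hcast]
        _ = (m.descFactorial n : ℝ) * α ^ n * w *
            (α ^ k * y ^ k * β ^ (m - n - k) * ((m - n).choose k : ℝ)) := by ring
    · intro k hk1 hk2
      have : m - n < k := by
        simp only [Finset.mem_range, Nat.lt_succ_iff] at hk1 hk2
        omega
      rw [Nat.choose_eq_zero_of_lt (show m < k + n by omega)]
      simp
  · rw [Nat.descFactorial_eq_zero_iff_lt.2 hnm]
    rw [Finset.sum_eq_zero]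
    · simp
    · intro k _
      rw [Nat.choose_eq_zero_of_lt (show m < k + n by omega)]
      simp

/-! ### Problem-specific lemmas -/

section stmt

variable {c d A : ℝ} {p : ℕ → ℝ}

lemma aux_A_pos (hd : 0 < d) (hdc : d < c) (hc : c < 1)
    (hA : A = (1 - c ^ 2)⁻¹ + d * (1 - d ^ 2)⁻¹) : 0 < A := by
  have hc0 : 0 < c := hd.trans hdc
  have h1 : 0 < 1 - c ^ 2 := by nlinarith
  have h2 : 0 < 1 - d ^ 2 := by nlinarith
  have h3 : 0 < (1 - c ^ 2)⁻¹ := inv_pos.2 h1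
  have h4 : 0 < d * (1 - d ^ 2)⁻¹ := mul_pos hd (inv_pos.2 h2)
  rw [hA]; linarith

lemma aux_p_pos (hd : 0 < d) (hdc : d < c) (hc : c < 1)
    (hA : A = (1 - c ^ 2)⁻¹ + d * (1 - d ^ 2)⁻¹)
    (hpdef : ∀ k, p k = if Even k then c ^ k / A else d ^ k / A) :
    ∀ k, 0 < p k := by
  have hc0 : 0 < c := hd.trans hdc
  have hA0 := aux_A_pos hd hdc hc hA
  intro k
  rw [hpdef k]
  split_ifs
  · exact div_pos (pow_pos hc0 k) hA0
  · exact div_pos (pow_pos hd k) hA0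

lemma aux_p_bound (hd : 0 < d) (hdc : d < c) (hc : c < 1)
    (hA : A = (1 - c ^ 2)⁻¹ + d * (1 - d ^ 2)⁻¹)
    (hpdef : ∀ k, p k = if Even k then c ^ k / A else d ^ k / A) :
    ∀ k, |p k| ≤ A⁻¹ * c ^ k := by
  have hc0 : 0 < c := hd.trans hdc
  have hA0 := aux_A_pos hd hdc hc hA
  intro k
  rw [hpdef k]
  split_ifs
  · rw [abs_of_pos (div_pos (pow_pos hc0 k) hA0), div_eq_mul_inv, mul_comm]
  · rw [abs_of_pos (div_pos (pow_pos hd k) hA0), div_eq_mul_inv, mul_comm]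
    exact mul_le_mul_of_nonneg_left (pow_le_pow_left₀ hd.le hdc.le k) (inv_pos.2 hA0).le

lemma aux_pmf (hd : 0 < d) (hdc : d < c) (hc : c < 1)
    (hA : A = (1 - c ^ 2)⁻¹ + d * (1 - d ^ 2)⁻¹)
    (hpdef : ∀ k, p k = if Even k then c ^ k / A else d ^ k / A) :
    IsPMF p := by
  have hc0 : 0 < c := hd.trans hdc
  have hA0 := aux_A_pos hd hdc hc hA
  refine ⟨fun k => (aux_p_pos hd hdc hc hA hpdef k).le, ?_⟩
  have hc2 : c ^ 2 < 1 := by nlinarith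
  have hd2 : d ^ 2 < 1 := by nlinarith
  have hE : HasSum (fun k => p (2 * k)) ((1 - c ^ 2)⁻¹ * A⁻¹) := by
    have h := (hasSum_geometric_of_lt_one (by positivity) hc2).mul_right A⁻¹
    have heq : ∀ k : ℕ, (c ^ 2) ^ k * A⁻¹ = p (2 * k) := by
      intro k
      rw [hpdef (2 * k), if_pos (even_two_mul k), div_eq_mul_inv, pow_mul]
    simpa only [heq] using h
  have hO : HasSum (fun k => p (2 * k + 1)) (d * (1 - d ^ 2)⁻¹ * A⁻¹) := by
    have h := ((hasSum_geometric_of_lt_one (by positivity) hd2).mul_left d).mul_right A⁻¹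
    have heq : ∀ k : ℕ, d * (d ^ 2) ^ k * A⁻¹ = p (2 * k + 1) := by
      intro k
      rw [hpdef (2 * k + 1), if_neg (by simp [Nat.even_add_one, parity_simps]),
        div_eq_mul_inv, pow_succ d (2 * k), pow_mul d 2 k]
      ring
    simpa only [heq] using h
  have hsum := HasSum.even_add_odd hE hO
  have hval : (1 - c ^ 2)⁻¹ * A⁻¹ + d * (1 - d ^ 2)⁻¹ * A⁻¹ = 1 := by
    have h : (1 - c ^ 2)⁻¹ * A⁻¹ + d * (1 - d ^ 2)⁻¹ * A⁻¹
        = ((1 - c ^ 2)⁻¹ + d * (1 - d ^ 2)⁻¹) * A⁻¹ := by ring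
    rw [h, ← hA, mul_inv_cancel₀ hA0.ne']
  rwa [hval] at hsum

lemma aux_Dform (hd : 0 < d) (hdc : d < c) (hc : c < 1)
    (hA : A = (1 - c ^ 2)⁻¹ + d * (1 - d ^ 2)⁻¹)
    (hpdef : ∀ k, p k = if Even k then c ^ k / A else d ^ k / A)
    (n : ℕ) (s : ℝ) (hs : |s| < 1) :
    iteratedDeriv n (fun t : ℝ => ∑' k, p k * t ^ k) s
      = ∑' k, ((k + n).descFactorial n : ℝ) * p (k + n) * s ^ k :=
  aux_L2 p A⁻¹ c (hd.trans hdc).le hc (aux_p_bound hd hdc hc hA hpdef) n s hs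

lemma aux_sumD (hd : 0 < d) (hdc : d < c) (hc : c < 1)
    (hA : A = (1 - c ^ 2)⁻¹ + d * (1 - d ^ 2)⁻¹)
    (hpdef : ∀ k, p k = if Even k then c ^ k / A else d ^ k / A)
    (n : ℕ) (s : ℝ) (hs : |s| < 1) :
    Summable fun k : ℕ => ((k + n).descFactorial n : ℝ) * p (k + n) * s ^ k := by
  have hc0 : 0 < c := hd.trans hdc
  have hb := aux_p_bound hd hdc hc hA hpdef
  have hA0 := aux_A_pos hd hdc hc hA
  have hcs0 : 0 ≤ c * |s| := mul_nonneg hc0.le (abs_nonneg s)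
  have hcs1 : c * |s| < 1 := by nlinarith [abs_nonneg s]
  apply Summable.of_abs
  apply Summable.of_nonneg_of_le (fun k => abs_nonneg _) (fun k => ?_)
    ((aux_LS n hcs0 hcs1).mul_left (A⁻¹ * c ^ n))
  rw [abs_mul, abs_mul, abs_pow, Nat.abs_cast]
  calc ((k + n).descFactorial n : ℝ) * |p (k + n)| * |s| ^ k
      ≤ ((k + n).descFactorial n : ℝ) * (A⁻¹ * c ^ (k + n)) * |s| ^ k := by
        apply mul_le_mul_of_nonneg_right _ (by positivity)
        exact mul_le_mul_of_nonneg_left (hb (k + n)) (Nat.cast_nonneg _)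
    _ = A⁻¹ * c ^ n * (((k + n).descFactorial n : ℝ) * (c * |s|) ^ k) := by
        rw [mul_pow, pow_add]; ring

lemma aux_neg (hd : 0 < d) (hdc : d < c) (hc : c < 1)
    (hA : A = (1 - c ^ 2)⁻¹ + d * (1 - d ^ 2)⁻¹)
    (hpdef : ∀ k, p k = if Even k then c ^ k / A else d ^ k / A) :
    ∀ ε : ℝ, 0 < ε → ∃ (n : ℕ) (s : ℝ), -ε < s ∧ s < 0 ∧
      iteratedDeriv n (fun t : ℝ => ∑' k, p k * t ^ k) s < 0 := by
  have hc0 : 0 < c := hd.trans hdc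
  have hA0 := aux_A_pos hd hdc hc hA
  intro ε hε
  set s0 : ℝ := min ε 1 / 2 with hs0def
  have hmin : 0 < min ε 1 := lt_min hε one_pos
  have hs0pos : 0 < s0 := by rw [hs0def]; linarith
  have hs0lt1 : s0 < 1 := by
    have : min ε 1 ≤ 1 := min_le_right _ _
    rw [hs0def]; linarith
  have hs0ltε : s0 < ε := by
    have h := min_le_left ε 1
    rw [hs0def]; linarith
  have hcd1 : 1 < c / d := (one_lt_div hd).2 hdc
  obtain ⟨N, hN⟩ := pow_unbounded_of_one_lt ((c * s0)⁻¹) hcd1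
  set n := 2 * N + 1 with hndef
  have hnodd : Odd n := ⟨N, by omega⟩
  have hcs : 0 < c * s0 := mul_pos hc0 hs0pos
  have key : ∀ m, n ≤ m → d ^ m < c ^ (m + 1) * s0 := by
    intro m hm
    have h1 : (c / d) ^ N ≤ (c / d) ^ m := pow_le_pow_right₀ hcd1.le (by omega)
    have h2 : (c * s0)⁻¹ < (c / d) ^ m := lt_of_lt_of_le hN h1
    have hdm : 0 < d ^ m := pow_pos hd m
    rw [div_pow, inv_eq_one_div] at h2
    have h3 : 1 * d ^ m < c ^ m * (c * s0) := (div_lt_div_iff₀ hcs hdm).1 h2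
    rw [pow_succ]
    nlinarith [h3]
  refine ⟨n, -s0, by linarith, by linarith, ?_⟩
  have habs : |(-s0 : ℝ)| < 1 := by rw [abs_neg, abs_of_pos hs0pos]; exact hs0lt1
  rw [aux_Dform hd hdc hc hA hpdef n (-s0) habs]
  set t : ℕ → ℝ := fun k => ((k + n).descFactorial n : ℝ) * p (k + n) * (-s0) ^ k with htdef
  have hsum : Summable t := aux_sumD hd hdc hc hA hpdef n (-s0) habs
  have hE : Summable fun j => t (2 * j) := hsum.comp_injective (fun a b h => by omega)
  have hO : Summable fun j => t (2 * j + 1) := hsum.comp_injective (fun a b h => by omega)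
  have hpair : ∀ j, t (2 * j) + t (2 * j + 1) < 0 := by
    intro j
    have hkey := key (2 * j + n) (by omega)
    have hoddm : ¬ Even (2 * j + n) := by
      rcases hnodd with ⟨r, hr⟩
      simp [hr, Nat.even_add_one, parity_simps]
    have hevenm : Even (2 * j + 1 + n) := by
      rcases hnodd with ⟨r, hr⟩
      refine ⟨j + r + 1, by omega⟩
    have he1 : (-s0 : ℝ) ^ (2 * j) = s0 ^ (2 * j) := by
      rw [pow_mul, pow_mul, neg_sq]
    have he2 : (-s0 : ℝ) ^ (2 * j + 1) = -(s0 ^ (2 * j) * s0) := by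
      rw [pow_succ, he1]; ring
    have ht1 : t (2 * j) = ((2 * j + n).descFactorial n : ℝ)
        * (d ^ (2 * j + n) * A⁻¹) * s0 ^ (2 * j) := by
      rw [htdef]
      simp only []
      rw [hpdef (2 * j + n), if_neg hoddm, he1, div_eq_mul_inv]
    have ht2 : t (2 * j + 1) = -(((2 * j + 1 + n).descFactorial n : ℝ)
        * (c ^ (2 * j + 1 + n) * A⁻¹) * (s0 ^ (2 * j) * s0)) := by
      rw [htdef]
      simp only []
      rw [hpdef (2 * j + 1 + n), if_pos hevenm, he2, div_eq_mul_inv]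
      ring
    rw [ht1, ht2]
    have hd1 : (0:ℝ) < ((2 * j + n).descFactorial n : ℝ) := by
      exact_mod_cast aux_dF_pos (show n ≤ 2 * j + n by omega)
    have hmono : ((2 * j + n).descFactorial n : ℝ) ≤ ((2 * j + 1 + n).descFactorial n : ℝ) := by
      exact_mod_cast aux_dF_mono n (show 2 * j + n ≤ 2 * j + 1 + n by omega)
    have hexp : (2 * j + n) + 1 = 2 * j + 1 + n := by omega
    rw [hexp] at hkey
    -- hkey : d ^ (2*j+n) < c ^ (2*j+1+n) * s0
    have hlt : ((2 * j + n).descFactorial n : ℝ) * d ^ (2 * j + n)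
        < ((2 * j + 1 + n).descFactorial n : ℝ) * (c ^ (2 * j + 1 + n) * s0) := by
      calc ((2 * j + n).descFactorial n : ℝ) * d ^ (2 * j + n)
          < ((2 * j + n).descFactorial n : ℝ) * (c ^ (2 * j + 1 + n) * s0) :=
            mul_lt_mul_of_pos_left hkey hd1
        _ ≤ ((2 * j + 1 + n).descFactorial n : ℝ) * (c ^ (2 * j + 1 + n) * s0) :=
            mul_le_mul_of_nonneg_right hmono (by positivity)
    have hB : (0:ℝ) < A⁻¹ := inv_pos.2 hA0
    have hS : (0:ℝ) < s0 ^ (2 * j) := pow_pos hs0pos _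
    nlinarith [mul_pos (mul_pos hB hS) (sub_pos.2 hlt)]
  have htotal : HasSum t ((∑' j, t (2 * j)) + ∑' j, t (2 * j + 1)) :=
    HasSum.even_add_odd hE.hasSum hO.hasSum
  rw [htotal.tsum_eq]
  rw [← Summable.tsum_add hE hO]
  have hlt := Summable.tsum_lt_tsum (f := fun j => t (2 * j) + t (2 * j + 1)) (g := fun _ => (0:ℝ))
    (fun j => (hpair j).le) (hpair 0) (hE.add hO) summable_zero
  simpa using hlt

lemma aux_B (hd : 0 < d) (hdc : d < c) (hc : c < 1)
    (hA : A = (1 - c ^ 2)⁻¹ + d * (1 - d ^ 2)⁻¹)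
    (hpdef : ∀ k, p k = if Even k then c ^ k / A else d ^ k / A)
    (α : ℝ) (hα0 : 0 < α) (hα1 : α < 1) (q : ℕ → ℝ)
    (hq0 : ∀ m, 0 ≤ q m) (hq1 : HasSum q 1) (hpq : ∀ k, p k = thin α q k)
    (n : ℕ) (s : ℝ) (hs1 : |s| < 1) (hβ : 0 ≤ 1 - α + α * s) :
    0 ≤ iteratedDeriv n (fun t : ℝ => ∑' k, p k * t ^ k) s := by
  rw [aux_Dform hd hdc hc hA hpdef n s hs1]
  have hβ0 : (0:ℝ) ≤ 1 - α := by linarith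
  set G : ℕ → ℕ → ℝ := fun m k =>
    ((k + n).descFactorial n : ℝ) *
      ((m.choose (k + n) : ℝ) * α ^ (k + n) * (1 - α) ^ (m - (k + n)) * q m) * s ^ k with hG
  have hstepA : ∀ k : ℕ, ((k + n).descFactorial n : ℝ) * p (k + n) * s ^ k = ∑' m, G m k := by
    intro k
    rw [hpq (k + n), thin, ← tsum_mul_left, ← tsum_mul_right]
  have hGnn : ∀ m k, 0 ≤ ((k + n).descFactorial n : ℝ) *
      ((m.choose (k + n) : ℝ) * α ^ (k + n) * (1 - α) ^ (m - (k + n)) * q m) := by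
    intro m k
    apply mul_nonneg (Nat.cast_nonneg _)
    apply mul_nonneg _ (hq0 m)
    apply mul_nonneg (mul_nonneg (Nat.cast_nonneg _) (by positivity)) (pow_nonneg hβ0 _)
  have habs_eq : ∀ m k, |G m k| = ((k + n).descFactorial n : ℝ) *
      ((m.choose (k + n) : ℝ) * α ^ (k + n) * (1 - α) ^ (m - (k + n)) * q m) * |s| ^ k := by
    intro m k
    rw [hG]
    simp only []
    rw [abs_mul, abs_of_nonneg (hGnn m k), abs_pow]
  have hzero : ∀ m, ∀ k ∉ Finset.range (m + 1), G m k = 0 := by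
    intro m k hk
    have hmk : m < k + n := by
      simp only [Finset.mem_range] at hk
      omega
    rw [hG]
    simp only []
    rw [Nat.choose_eq_zero_of_lt hmk]
    simp
  have hzeroabs : ∀ m, ∀ k ∉ Finset.range (m + 1), |G m k| = 0 := by
    intro m k hk
    rw [hzero m k hk, abs_zero]
  -- value of the absolute slices
  have hslice_val : ∀ m, (∑' k, |G m k|)
      = (m.descFactorial n : ℝ) * α ^ n * q m * (α * |s| + (1 - α)) ^ (m - n) := by
    intro m
    rw [tsum_eq_sum (hzeroabs m)]
    rw [Finset.sum_congr rfl (fun k _ => habs_eq m k)]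
    exact aux_finsum α (1 - α) (q m) |s| n m
  set γ : ℝ := α * |s| + (1 - α) with hγ
  have hγ0 : 0 ≤ γ := by
    rw [hγ]
    have : 0 ≤ α * |s| := mul_nonneg hα0.le (abs_nonneg s)
    linarith
  have hγ1 : γ < 1 := by
    rw [hγ]
    have : α * |s| < α * 1 := mul_lt_mul_of_pos_left hs1 hα0
    linarith
  have habs : Summable (fun mk : ℕ × ℕ => |G mk.1 mk.2|) := by
    apply (summable_prod_of_nonneg (fun mk => abs_nonneg _)).2
    constructor
    · intro m
      exact summable_of_ne_finset_zero (hzeroabs m)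
    · have hmaj : Summable fun m : ℕ => α ^ n * ((m.descFactorial n : ℝ) * γ ^ (m - n)) := by
        apply (summable_nat_add_iff n).1
        apply Summable.congr ((aux_LS n hγ0 hγ1).mul_left (α ^ n))
        intro j
        rw [show j + n - n = j from by omega]
      apply Summable.of_nonneg_of_le (fun m => tsum_nonneg (fun k => abs_nonneg _))
        (fun m => ?_) hmaj
      show (∑' k, |G m k|) ≤ α ^ n * ((m.descFactorial n : ℝ) * γ ^ (m - n))
      rw [hslice_val m]
      have hq1m : q m ≤ 1 := le_hasSum hq1 m (fun j _ => hq0 j)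
      calc (m.descFactorial n : ℝ) * α ^ n * q m * γ ^ (m - n)
          ≤ (m.descFactorial n : ℝ) * α ^ n * 1 * γ ^ (m - n) := by
            apply mul_le_mul_of_nonneg_right _ (pow_nonneg hγ0 _)
            apply mul_le_mul_of_nonneg_left hq1m (by positivity)
        _ = α ^ n * ((m.descFactorial n : ℝ) * γ ^ (m - n)) := by ring
  have hGsum : Summable (Function.uncurry G) := by
    apply Summable.of_abs
    exact habs
  have hswap : (∑' k, ∑' m, G m k) = ∑' m, ∑' k, G m k := Summable.tsum_comm hGsum
  rw [tsum_congr hstepA, hswap]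
  apply tsum_nonneg
  intro m
  have hval : (∑' k, G m k)
      = (m.descFactorial n : ℝ) * α ^ n * q m * (α * s + (1 - α)) ^ (m - n) := by
    rw [tsum_eq_sum (hzero m)]
    exact aux_finsum α (1 - α) (q m) s n m
  rw [hval]
  have h1 : 0 ≤ α * s + (1 - α) := by linarith
  have := hq0 m
  positivity

/-- the pmf `p_k = c^k/A` (k even), `d^k/A` (k odd), with
`0 < d < c < 1` and `A = (1−c²)⁻¹ + d(1−d²)⁻¹`, is a probability mass function
with full support (no holes), yet its p.g.f. is not absolutely monotone on
`(−ε,0)` for any `ε ∈ (0,1)`; equivalently `ρ(X) = 1`. -/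
theorem stmt_15 (c d A : ℝ) (p : ℕ → ℝ) (hd : 0 < d) (hdc : d < c) (hc : c < 1)
    (hA : A = (1 - c ^ 2)⁻¹ + d * (1 - d ^ 2)⁻¹)
    (hpdef : ∀ k, p k = if Even k then c ^ k / A else d ^ k / A) :
    IsPMF p ∧ (∀ k, 0 < p k) ∧
    (∀ ε ∈ Set.Ioo (0:ℝ) 1,
      ¬ ∀ n : ℕ, ∀ s ∈ Set.Ioo (-ε) (0:ℝ),
          0 ≤ iteratedDeriv n (fun t : ℝ => ∑' k : ℕ, p k * t ^ k) s) ∧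
    rho p = 1 := by
  have hppos := aux_p_pos hd hdc hc hA hpdef
  have hpmf := aux_pmf hd hdc hc hA hpdef
  refine ⟨hpmf, hppos, ?_, ?_⟩
  · intro ε hε hcon
    obtain ⟨n, s, h1, h2, h3⟩ := aux_neg hd hdc hc hA hpdef ε hε.1
    exact absurd (hcon n s ⟨h1, h2⟩) (not_le.2 h3)
  · have hmem1 : MemM 1 p := by
      refine ⟨p, hpmf, fun k => ?_⟩
      rw [thin]
      have hterm : ∀ m : ℕ, (m.choose k : ℝ) * 1 ^ k * (1 - 1) ^ (m - k) * p m
          = if m = k then p k else 0 := by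
        intro m
        rcases lt_trichotomy m k with h | h | h
        · rw [Nat.choose_eq_zero_of_lt h, if_neg (Nat.ne_of_lt h)]
          simp
        · subst h
          simp
        · rw [if_neg (Nat.ne_of_gt h)]
          have hmk : m - k ≠ 0 := by omega
          rw [sub_self, zero_pow hmk]
          ring
      rw [tsum_congr hterm, tsum_ite_eq]
    have hset : {α : ℝ | α ∈ Set.Icc (0:ℝ) 1 ∧ MemM α p} = {1} := by
      ext α
      simp only [Set.mem_setOf_eq, Set.mem_singleton_iff]
      constructor
      · rintro ⟨⟨hα0, hα1⟩, q, ⟨hq0, hq1⟩, hpq⟩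
        by_contra hne
        have hαlt : α < 1 := lt_of_le_of_ne hα1 hne
        rcases eq_or_lt_of_le hα0 with h0 | h0
        · -- α = 0
          have h1 := hpq 1
          rw [← h0, thin] at h1
          have : p 1 = 0 := by
            rw [h1]
            convert tsum_zero with m
            simp
          exact absurd this (ne_of_gt (hppos 1))
        · -- 0 < α < 1
          set ε : ℝ := min 1 ((1 - α) / α) with hεdef
          have hεpos : 0 < ε := lt_min one_pos (div_pos (by linarith) h0)
          obtain ⟨n, s, hs1, hs2, hneg⟩ := aux_neg hd hdc hc hA hpdef ε hεpos
          have hε1 : ε ≤ 1 := min_le_left _ _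
          have hε2 : ε ≤ (1 - α) / α := min_le_right _ _
          have habs1 : |s| < 1 := abs_lt.2 ⟨by linarith, by linarith⟩
          have hβc : 0 ≤ 1 - α + α * s := by
            have h5 : -((1 - α) / α) ≤ -ε := by linarith
            have h6 : -((1 - α) / α) < s := lt_of_le_of_lt h5 hs1
            have h7 : α * (-((1 - α) / α)) < α * s := mul_lt_mul_of_pos_left h6 h0
            have h8 : α * ((1 - α) / α) = 1 - α := by
              field_simp
            nlinarith [h7, h8]
          have := aux_B hd hdc hc hA hpdef α h0 hαlt q hq0 hq1 hpq n s habs1 hβc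
          exact absurd this (not_le.2 hneg)
      · rintro rfl
        exact ⟨⟨zero_le_one, le_refl 1⟩, hmem1⟩
    rw [rho, hset, csInf_singleton]

end stmt
end
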